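/- arXiv:1904.12727 — 7 statements merged into one kernel-verified Lean document; each statement's English description precedes it below -/
import Mathlib

section
/- Let d be a positive integer, let 1 ≤ j ≤ d, set t := cj and ε := (3d)^{−12d}(50d)^{−3d²/2}. Then for every nonnegative integer m and every w ∈ [0, ε], the m-th derivative of w ↦ R(j,w) satisfies |∂_w^m R(j,w)| ≤ m!·C(m+3,3)·e^{g(ε)}·(4e^{2tε}t)^m, where g(ε) := tε/(1 + √(1 + tε²)). -/
noncomputable def cconst : ℝ := 2 * Real.pi ^ 2 / 3

/-- The function `R(j, w)` approximating `p(n+j)/p(n)`. -/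
noncomputable def Rfun (j : ℕ) (w : ℝ) : ℝ :=
  Real.exp (cconst * j * w / (1 + Real.sqrt (1 + cconst * j * w ^ 2))) *
      (Real.sqrt (1 + cconst * j * w ^ 2) - w) /
    ((1 - w) * (1 + cconst * j * w ^ 2) ^ ((3 : ℝ) / 2))

open Metric Complex

noncomputable def RT (t x : ℝ) : ℝ :=
  Real.exp (t * x / (1 + Real.sqrt (1 + t * x ^ 2))) * (Real.sqrt (1 + t * x ^ 2) - x) /
    ((1 - x) * (1 + t * x ^ 2) ^ ((3 : ℝ) / 2))

-- Part A: Cauchy estimate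
lemma cauchy_est {F : ℂ → ℂ} {c : ℂ} {r M : ℝ} (hr : 0 < r)
    (hF : DifferentiableOn ℂ F (closedBall c r))
    (hM : ∀ z ∈ closedBall c r, ‖F z‖ ≤ M) (m : ℕ) :
    ‖iteratedDeriv m F c‖ ≤ m.factorial * M / r ^ m := by
  lift r to NNReal using hr.le with R hR
  have hR0 : 0 < R := by exact_mod_cast hr
  have h := hF.hasFPowerSeriesOnBall hR0
  set p := cauchyPowerSeries F c R with hp
  have key : iteratedDeriv m F c = (m.factorial : ℂ) * (p m fun _ => 1) := by
    rw [iteratedDeriv_eq_iteratedFDeriv, ← h.factorial_smul (1 : ℂ) m,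
      nsmul_eq_mul]
  have hM0 : 0 ≤ M := le_trans (norm_nonneg _) (hM c (mem_closedBall_self hr.le))
  have hcont : Continuous fun θ : ℝ => ‖F (circleMap c R θ)‖ := by
    refine (hF.continuousOn.comp_continuous (continuous_circleMap c R) ?_).norm
    intro θ
    exact sphere_subset_closedBall (circleMap_mem_sphere c hr.le θ)
  have hint : (∫ θ : ℝ in (0)..2 * Real.pi, ‖F (circleMap c R θ)‖) ≤ 2 * Real.pi * M := by
    have := intervalIntegral.integral_mono_on (a := (0:ℝ)) (b := 2 * Real.pi)
      (by positivity) (hcont.intervalIntegrable _ _) (intervalIntegrable_const (μ := MeasureTheory.volume) (c := M))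
      (fun θ _ => hM _ (sphere_subset_closedBall (circleMap_mem_sphere c hr.le θ)))
    simpa using this
  have hnorm := norm_cauchyPowerSeries_le F c R m
  have happ : ‖p m fun _ => 1‖ ≤ ‖p m‖ := by
    simpa using (p m).le_opNorm fun _ => (1 : ℂ)
  rw [key]
  rw [norm_mul, Complex.norm_natCast]
  calc (m.factorial : ℝ) * ‖p m fun _ => 1‖
      ≤ (m.factorial : ℝ) * (((2 * Real.pi)⁻¹ * ∫ θ : ℝ in (0)..2 * Real.pi,
          ‖F (circleMap c R θ)‖) * |(R : ℝ)|⁻¹ ^ m) := by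
        refine mul_le_mul_of_nonneg_left (happ.trans hnorm) (by positivity)
    _ ≤ (m.factorial : ℝ) * (((2 * Real.pi)⁻¹ * (2 * Real.pi * M)) * |(R : ℝ)|⁻¹ ^ m) := by
        gcongr
    _ = m.factorial * M / (R : ℝ) ^ m := by
        rw [_root_.abs_of_nonneg (by exact_mod_cast hR0.le : (0:ℝ) ≤ (R:ℝ))]
        have hRne : (R:ℝ) ≠ 0 := by exact_mod_cast hR0.ne'
        have hpi : (2 * Real.pi) ≠ 0 := by positivity
        field_simp
        rw [one_div, inv_pow, mul_assoc, inv_mul_cancel₀ (pow_ne_zero _ hRne), mul_one]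

lemma analyticOnNhd_iteratedDeriv {F : ℂ → ℂ} {s : Set ℂ}
    (hF : AnalyticOnNhd ℂ F s) (m : ℕ) : AnalyticOnNhd ℂ (iteratedDeriv m F) s := by
  induction m with
  | zero => simpa [iteratedDeriv_zero] using hF
  | succ m ih => rw [iteratedDeriv_succ]; exact ih.deriv

lemma transfer_re {F : ℂ → ℂ} {f : ℝ → ℝ} {s : Set ℂ} (hs : IsOpen s)
    (hF : DifferentiableOn ℂ F s) (hsub : ∀ x : ℝ, (x : ℂ) ∈ s → f x = (F x).re)
    (m : ℕ) : ∀ x : ℝ, (x : ℂ) ∈ s → iteratedDeriv m f x = (iteratedDeriv m F x).re := by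
  have hA : AnalyticOnNhd ℂ F s := hF.analyticOnNhd hs
  induction m with
  | zero => simpa [iteratedDeriv_zero] using hsub
  | succ m ih =>
    intro x hx
    have hsre : IsOpen (((↑) : ℝ → ℂ) ⁻¹' s) := hs.preimage Complex.continuous_ofReal
    have hEq : (fun y : ℝ => iteratedDeriv m f y)
        =ᶠ[nhds x] fun y : ℝ => (iteratedDeriv m F (y : ℂ)).re := by
      filter_upwards [hsre.mem_nhds hx] with y hy
      exact ih y hy
    have hG : HasDerivAt (iteratedDeriv m F)
        (deriv (iteratedDeriv m F) (x : ℂ)) (x : ℂ) :=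
      ((analyticOnNhd_iteratedDeriv hA m) _ hx).differentiableAt.hasDerivAt
    have := hG.real_of_complex
    rw [iteratedDeriv_succ, iteratedDeriv_succ, hEq.deriv_eq, this.deriv]
noncomputable def Fc (t : ℝ) (z : ℂ) : ℂ :=
  Complex.exp ((t : ℂ) * z / (1 + (1 + (t : ℂ) * z ^ 2) ^ ((1 : ℂ) / 2))) *
      ((1 + (t : ℂ) * z ^ 2) ^ ((1 : ℂ) / 2) - z) /
    ((1 - z) * (1 + (t : ℂ) * z ^ 2) ^ ((3 : ℂ) / 2))

lemma re_cpow_nonneg {u : ℂ} (hu : u ≠ 0) : 0 ≤ (u ^ ((1 : ℂ) / 2)).re := by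
  rw [Complex.cpow_def_of_ne_zero hu, Complex.exp_re]
  have him : (Complex.log u * (1 / 2)).im = u.arg / 2 := by
    simp [Complex.log_im]
    ring
  rw [him]
  have h1 := Complex.arg_le_pi u
  have h2 := Complex.neg_pi_lt_arg u
  have : Real.cos (u.arg / 2) ≥ 0 := by
    apply Real.cos_nonneg_of_mem_Icc
    constructor <;> [linarith; linarith]
  positivity

section
variable {t : ℝ} {z : ℂ}

lemma hA_bound (ht : 6 ≤ t) (hz : ‖z‖ ≤ 27 / (100 * t)) : ‖(t : ℂ) * z ^ 2‖ ≤ 1 / 64 := by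
  have ht0 : (0:ℝ) < t := by linarith
  have h1 : ‖(t : ℂ) * z ^ 2‖ = t * ‖z‖ ^ 2 := by
    rw [norm_mul, norm_pow, Complex.norm_real, Real.norm_eq_abs, abs_of_pos ht0]
  rw [h1]
  have h2 : ‖z‖ ^ 2 ≤ (27 / (100 * t)) ^ 2 := by
    exact pow_le_pow_left₀ (norm_nonneg _) hz 2
  calc t * ‖z‖ ^ 2 ≤ t * (27 / (100 * t)) ^ 2 := by nlinarith
    _ = 729 / (10000 * t) := by field_simp; ring
    _ ≤ 1 / 64 := by rw [div_le_div_iff₀ (by positivity) (by norm_num)]; nlinarith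

lemma re_u (hA : ‖(t : ℂ) * z ^ 2‖ ≤ 1 / 64) : 63 / 64 ≤ (1 + (t : ℂ) * z ^ 2).re := by
  have := abs_le.mp ((Complex.abs_re_le_norm ((t : ℂ) * z ^ 2)).trans hA)
  simp only [Complex.add_re, Complex.one_re]
  linarith [this.1]

lemma u_slit (hA : ‖(t : ℂ) * z ^ 2‖ ≤ 1 / 64) : (1 + (t : ℂ) * z ^ 2) ∈ Complex.slitPlane :=
  Or.inl (by linarith [re_u hA])

lemma u_ne (hA : ‖(t : ℂ) * z ^ 2‖ ≤ 1 / 64) : (1 + (t : ℂ) * z ^ 2) ≠ 0 :=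
  Complex.slitPlane_ne_zero (u_slit hA)

lemma norm_u_le (hA : ‖(t : ℂ) * z ^ 2‖ ≤ 1 / 64) : ‖1 + (t : ℂ) * z ^ 2‖ ≤ 65 / 64 := by
  calc ‖1 + (t : ℂ) * z ^ 2‖ ≤ ‖(1 : ℂ)‖ + ‖(t : ℂ) * z ^ 2‖ := norm_add_le _ _
    _ ≤ 65 / 64 := by rw [norm_one]; linarith

lemma norm_u_ge (hA : ‖(t : ℂ) * z ^ 2‖ ≤ 1 / 64) : 63 / 64 ≤ ‖1 + (t : ℂ) * z ^ 2‖ :=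
  (re_u hA).trans (Complex.re_le_norm _)

lemma norm_cpow_half_le (hA : ‖(t : ℂ) * z ^ 2‖ ≤ 1 / 64) :
    ‖(1 + (t : ℂ) * z ^ 2) ^ ((1 : ℂ) / 2)‖ ≤ 65 / 64 := by
  set u := 1 + (t : ℂ) * z ^ 2
  have h : ‖u ^ ((1 : ℂ) / 2)‖ = ‖u‖ ^ ((1 : ℝ) / 2) := by
    have : ((1 : ℂ) / 2) = (((1 : ℝ) / 2 : ℝ) : ℂ) := by norm_num
    rw [this, Complex.norm_cpow_real]
  rw [h]
  rcases le_or_gt ‖u‖ 1 with h1 | h1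
  · calc ‖u‖ ^ ((1:ℝ)/2) ≤ 1 := Real.rpow_le_one (norm_nonneg _) h1 (by norm_num)
      _ ≤ 65/64 := by norm_num
  · calc ‖u‖ ^ ((1:ℝ)/2) ≤ ‖u‖ ^ (1:ℝ) :=
        Real.rpow_le_rpow_of_exponent_le h1.le (by norm_num)
      _ = ‖u‖ := Real.rpow_one _
      _ ≤ 65/64 := norm_u_le hA

lemma norm_cpow_three_half_ge (hA : ‖(t : ℂ) * z ^ 2‖ ≤ 1 / 64) :
    9 / 10 ≤ ‖(1 + (t : ℂ) * z ^ 2) ^ ((3 : ℂ) / 2)‖ := by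
  set u := 1 + (t : ℂ) * z ^ 2
  have h : ‖u ^ ((3 : ℂ) / 2)‖ = ‖u‖ ^ ((3 : ℝ) / 2) := by
    have : ((3 : ℂ) / 2) = (((3 : ℝ) / 2 : ℝ) : ℂ) := by norm_num
    rw [this, Complex.norm_cpow_real]
  rw [h]
  rcases le_or_gt 1 ‖u‖ with h1 | h1
  · calc (9:ℝ)/10 ≤ 1 := by norm_num
      _ ≤ ‖u‖ ^ ((3:ℝ)/2) := Real.one_le_rpow h1 (by norm_num)
  · have h0 : (0:ℝ) < ‖u‖ := lt_of_lt_of_le (by norm_num) (norm_u_ge hA)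
    have h2 : ‖u‖ ^ (2:ℝ) ≤ ‖u‖ ^ ((3:ℝ)/2) :=
      Real.rpow_le_rpow_of_exponent_ge h0 h1.le (by norm_num)
    have h3 : ‖u‖ ^ (2:ℝ) = ‖u‖ ^ (2:ℕ) := by rw [← Real.rpow_natCast ‖u‖ 2]; norm_num
    have h4 : (63/64:ℝ) ^ 2 ≤ ‖u‖ ^ (2:ℕ) := by
      apply pow_le_pow_left₀ (by norm_num) (norm_u_ge hA)
    calc (9:ℝ)/10 ≤ (63/64:ℝ) ^ (2:ℕ) := by norm_num
      _ ≤ ‖u‖ ^ (2:ℕ) := h4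
      _ = ‖u‖ ^ (2:ℝ) := h3.symm
      _ ≤ _ := h2

lemma one_add_cpow_ne (hA : ‖(t : ℂ) * z ^ 2‖ ≤ 1 / 64) :
    (1 : ℂ) + (1 + (t : ℂ) * z ^ 2) ^ ((1 : ℂ) / 2) ≠ 0 := by
  intro h
  have hre := re_cpow_nonneg (u_ne hA)
  have : ((1 : ℂ) + (1 + (t : ℂ) * z ^ 2) ^ ((1 : ℂ) / 2)).re = 0 := by rw [h]; simp
  simp only [Complex.add_re, Complex.one_re] at this
  linarith

lemma norm_one_add_cpow_ge (hA : ‖(t : ℂ) * z ^ 2‖ ≤ 1 / 64) :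
    1 ≤ ‖(1 : ℂ) + (1 + (t : ℂ) * z ^ 2) ^ ((1 : ℂ) / 2)‖ := by
  have hre := re_cpow_nonneg (u_ne hA)
  calc (1:ℝ) ≤ ((1 : ℂ) + (1 + (t : ℂ) * z ^ 2) ^ ((1 : ℂ) / 2)).re := by
        simp only [Complex.add_re, Complex.one_re]; linarith
    _ ≤ _ := Complex.re_le_norm _

end

lemma Fc_diff {t : ℝ} (ht : 6 ≤ t) :
    DifferentiableOn ℂ (Fc t) {z : ℂ | ‖z‖ < 27 / (100 * t)} := by
  intro z hz
  apply DifferentiableAt.differentiableWithinAt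
  have hz' : ‖z‖ ≤ 27 / (100 * t) := le_of_lt hz
  have hA := hA_bound ht hz'
  have h1 : DifferentiableAt ℂ (fun z : ℂ => 1 + (t : ℂ) * z ^ 2) z := by fun_prop
  have hC : DifferentiableAt ℂ (fun z : ℂ => (1 + (t : ℂ) * z ^ 2) ^ ((1 : ℂ) / 2)) z :=
    h1.cpow (differentiableAt_const _) (u_slit hA)
  have hC3 : DifferentiableAt ℂ (fun z : ℂ => (1 + (t : ℂ) * z ^ 2) ^ ((3 : ℂ) / 2)) z :=
    h1.cpow (differentiableAt_const _) (u_slit hA)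
  have hexp : DifferentiableAt ℂ
      (fun z : ℂ => Complex.exp ((t : ℂ) * z / (1 + (1 + (t : ℂ) * z ^ 2) ^ ((1 : ℂ) / 2)))) z := by
    apply DifferentiableAt.cexp
    exact (differentiableAt_id.const_mul _).div ((differentiableAt_const _).add hC)
      (one_add_cpow_ne hA)
  have hzne : (1 : ℂ) - z ≠ 0 := by
    intro h
    have h2 : ‖z‖ = 1 := by
      have : z = 1 := by linear_combination -h
      rw [this]; simp
    have : 27 / (100 * t) ≤ 27 / (100 * 6) := by
      apply div_le_div_of_nonneg_left (by norm_num) (by norm_num) (by linarith)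
    rw [h2] at hz'
    norm_num at this
    linarith
  have hne : ((1 : ℂ) - z) * (1 + (t : ℂ) * z ^ 2) ^ ((3 : ℂ) / 2) ≠ 0 := by
    apply mul_ne_zero hzne
    intro h
    have := norm_cpow_three_half_ge hA
    rw [h] at this
    simp at this
    linarith
  exact (hexp.mul (hC.sub differentiableAt_id)).div
    ((((differentiableAt_const _).sub differentiableAt_id).mul hC3)) hne

lemma Fc_real {t : ℝ} (ht : 6 ≤ t) (x : ℝ) : ((RT t x : ℝ) : ℂ) = Fc t (x : ℂ) := by
  have ha : (0:ℝ) < 1 + t * x ^ 2 := by nlinarith [sq_nonneg x]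
  have key : ((1:ℂ) + (t:ℂ) * (x:ℂ) ^ 2) = (((1 + t * x ^ 2 : ℝ)) : ℂ) := by push_cast; ring
  have h12 : (((1 + t * x ^ 2 : ℝ)) : ℂ) ^ ((1:ℂ)/2) = ((Real.sqrt (1 + t * x ^ 2) : ℝ) : ℂ) := by
    rw [Real.sqrt_eq_rpow, Complex.ofReal_cpow ha.le]
    norm_num
  have h32 : (((1 + t * x ^ 2 : ℝ)) : ℂ) ^ ((3:ℂ)/2) = (((1 + t * x ^ 2) ^ ((3:ℝ)/2) : ℝ) : ℂ) := by
    rw [Complex.ofReal_cpow ha.le]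
    norm_num
  rw [RT, Fc, key, h12, h32]
  push_cast
  ring

lemma Fc_bound {t : ℝ} (ht : 6 ≤ t) {z : ℂ} (hz : ‖z‖ ≤ 26 / (100 * t)) : ‖Fc t z‖ ≤ 2 := by
  have ht0 : (0:ℝ) < t := by linarith
  have hz' : ‖z‖ ≤ 27 / (100 * t) := hz.trans (by gcongr <;> norm_num)
  have hA := hA_bound ht hz'
  have hz6 : ‖z‖ ≤ 26 / 600 := hz.trans (by
    apply div_le_div_of_nonneg_left (by norm_num) (by norm_num)
    linarith)
  have htz : t * ‖z‖ ≤ 26 / 100 := by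
    calc t * ‖z‖ ≤ t * (26 / (100 * t)) := by gcongr
      _ = 26 / 100 := by field_simp
  set u : ℂ := 1 + (t : ℂ) * z ^ 2 with hu
  set C : ℂ := u ^ ((1 : ℂ) / 2) with hC
  -- exponential bound
  have hexp : ‖Complex.exp ((t : ℂ) * z / (1 + C))‖ ≤ 100 / 74 := by
    rw [Complex.norm_exp]
    have h1 : ((t : ℂ) * z / (1 + C)).re ≤ ‖(t : ℂ) * z / (1 + C)‖ := Complex.re_le_norm _
    have h2 : ‖(t : ℂ) * z / (1 + C)‖ ≤ 26 / 100 := by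
      rw [norm_div]
      have hn : ‖(t : ℂ) * z‖ = t * ‖z‖ := by
        rw [norm_mul, Complex.norm_real, Real.norm_eq_abs, abs_of_pos ht0]
      have hd := norm_one_add_cpow_ge hA
      calc ‖(t : ℂ) * z‖ / ‖1 + C‖ ≤ ‖(t : ℂ) * z‖ / 1 := by
            apply div_le_div_of_nonneg_left (norm_nonneg _) (by norm_num) hd
        _ = t * ‖z‖ := by rw [div_one, hn]
        _ ≤ 26 / 100 := htz
    have h3 : Real.exp (((t : ℂ) * z / (1 + C)).re) ≤ Real.exp (26 / 100) :=
      Real.exp_le_exp.mpr (h1.trans h2)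
    have h4 : Real.exp (26 / 100) ≤ 100 / 74 := by
      have h5 := Real.add_one_le_exp (-(26 / 100 : ℝ))
      have h6 : Real.exp (-(26/100 : ℝ)) = (Real.exp (26/100))⁻¹ := by
        rw [Real.exp_neg]
      rw [h6] at h5
      have h7 : (0:ℝ) < Real.exp (26/100) := Real.exp_pos _
      have h8 : Real.exp (26/100) * (Real.exp (26/100))⁻¹ = 1 := mul_inv_cancel₀ h7.ne'
      nlinarith [h5, h7, h8]
    linarith
  have hnum : ‖C - z‖ ≤ 65 / 64 + 26 / 600 := by
    calc ‖C - z‖ ≤ ‖C‖ + ‖z‖ := norm_sub_le _ _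
      _ ≤ 65 / 64 + 26 / 600 := add_le_add (norm_cpow_half_le hA) hz6
  have hden1 : 1 - 26 / 600 ≤ ‖(1 : ℂ) - z‖ := by
    have := norm_sub_norm_le (1 : ℂ) z
    rw [norm_one] at this
    linarith
  have hden2 := norm_cpow_three_half_ge hA
  have key : ‖Fc t z‖ = ‖Complex.exp ((t : ℂ) * z / (1 + C))‖ * ‖C - z‖ /
      (‖(1 : ℂ) - z‖ * ‖u ^ ((3 : ℂ) / 2)‖) := by
    rw [Fc, norm_div, norm_mul, norm_mul]
  rw [key]
  have hd0 : (0:ℝ) < (1 - 26 / 600) * (9 / 10) := by norm_num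
  calc ‖Complex.exp ((t : ℂ) * z / (1 + C))‖ * ‖C - z‖ / (‖(1 : ℂ) - z‖ * ‖u ^ ((3 : ℂ) / 2)‖)
      ≤ (100 / 74) * (65 / 64 + 26 / 600) / ((1 - 26 / 600) * (9 / 10)) := by
        apply div_le_div₀ (by positivity)
          (mul_le_mul hexp hnum (norm_nonneg _) (by norm_num)) hd0
        exact mul_le_mul hden1 hden2 (by norm_num) (norm_nonneg _)
    _ ≤ 2 := by norm_num
set_option maxHeartbeats 2000000 in
lemma RT_le {t ε g : ℝ} (ht : 6 ≤ t) (hεt : t * ε ≤ 1 / 1000) (hε0 : 0 ≤ ε)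
    (hg : g = t * ε / (1 + Real.sqrt (1 + t * ε ^ 2))) {w : ℝ} (hw0 : 0 ≤ w) (hwε : w ≤ ε) :
    |RT t w| ≤ Real.exp g := by
  have ht0 : (0:ℝ) < t := by linarith
  have hε1 : ε ≤ 1 / 1000 := by nlinarith
  have hw1 : w ≤ 1 / 1000 := hwε.trans hε1
  have htw : t * w ≤ 1 / 1000 := by nlinarith
  have hpw : (0:ℝ) < 1 + t * w ^ 2 := by positivity
  have hpε : (0:ℝ) < 1 + t * ε ^ 2 := by positivity
  set s := Real.sqrt (1 + t * w ^ 2) with hs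
  set b := Real.sqrt (1 + t * ε ^ 2) with hb
  have hs2 : s ^ 2 = 1 + t * w ^ 2 := Real.sq_sqrt hpw.le
  have hb2 : b ^ 2 = 1 + t * ε ^ 2 := Real.sq_sqrt hpε.le
  have hs0 : 0 ≤ s := Real.sqrt_nonneg _
  have hb0 : 0 ≤ b := Real.sqrt_nonneg _
  have hs1 : 1 ≤ s := by nlinarith [hs2, hs0, mul_nonneg ht0.le (sq_nonneg w)]
  have hb1 : 1 ≤ b := by nlinarith [hb2, hb0, mul_nonneg ht0.le (sq_nonneg ε)]
  have hsle : s ≤ 2 := by nlinarith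
  have hble : b ≤ 2 := by nlinarith
  -- rewrite the rpow as s^3
  have hsr : (1 + t * w ^ 2) ^ ((3:ℝ)/2) = s ^ (3:ℕ) := by
    rw [← hs2, ← Real.rpow_natCast s 2, ← Real.rpow_mul hs0, ← Real.rpow_natCast s 3]
    norm_num
  -- exponent comparison
  have hwb : w * b ≤ ε * s := by
    have hsq : (w * b) ^ 2 ≤ (ε * s) ^ 2 := by nlinarith
    nlinarith [mul_nonneg hw0 hb0, mul_nonneg hε0 hs0]
  have hexp : t * w / (1 + s) ≤ g := by
    rw [hg]
    rw [div_le_div_iff₀ (by linarith : (0:ℝ) < 1 + s) (by linarith : (0:ℝ) < 1 + b)]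
    nlinarith [mul_nonneg ht0.le (sub_nonneg.mpr hwb), mul_nonneg ht0.le (sub_nonneg.mpr hwε)]
  -- ratio ≤ 1
  have h1 : (0:ℝ) ≤ s ^ 2 + s - w * (s ^ 2 + s + 1) := by nlinarith
  have hkey : s - w ≤ (1 - w) * s ^ 3 := by
    nlinarith [mul_nonneg (by linarith : (0:ℝ) ≤ s - 1) h1]
  have hd0 : (0:ℝ) < (1 - w) * s ^ 3 := by
    apply mul_pos (by linarith)
    positivity
  have hRT : RT t w = Real.exp (t * w / (1 + s)) * (s - w) / ((1 - w) * s ^ 3) := by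
    rw [RT, hsr]
  have hnum0 : (0:ℝ) ≤ s - w := by linarith
  rw [hRT, _root_.abs_of_nonneg (div_nonneg (mul_nonneg (Real.exp_pos _).le hnum0) hd0.le)]
  calc Real.exp (t * w / (1 + s)) * (s - w) / ((1 - w) * s ^ 3)
      ≤ Real.exp (t * w / (1 + s)) := by
        rw [div_le_iff₀ hd0]
        have := Real.exp_pos (t * w / (1 + s))
        nlinarith [hkey]
    _ ≤ Real.exp g := Real.exp_le_exp.mpr hexp

set_option maxHeartbeats 2000000 in
theorem deriv_R_bound (d : ℕ) (hd : 1 ≤ d) (j : ℕ) (hj1 : 1 ≤ j) (hjd : j ≤ d)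
    (t ε g : ℝ) (ht : t = cconst * j)
    (hε : ε = ((3 * d : ℝ)) ^ (-(12 * d : ℝ)) * ((50 * d : ℝ)) ^ (-(3 * (d : ℝ) ^ 2 / 2)))
    (hg : g = t * ε / (1 + Real.sqrt (1 + t * ε ^ 2)))
    (m : ℕ) (w : ℝ) (hw : w ∈ Set.Icc (0 : ℝ) ε) :
    |iteratedDeriv m (Rfun j) w| ≤
      (m.factorial : ℝ) * ((m + 3).choose 3 : ℝ) * Real.exp g *
        (4 * Real.exp (2 * t * ε) * t) ^ m := by
  obtain ⟨hw0, hwε⟩ := hw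
  have hπ3 := Real.pi_gt_three
  have hπ315 := Real.pi_lt_d2
  have hπ0 : (0:ℝ) < Real.pi := by linarith
  have hcc6 : 6 ≤ cconst := by rw [cconst]; nlinarith
  have hcc7 : cconst ≤ 7 := by rw [cconst]; nlinarith
  have hj' : (1:ℝ) ≤ (j:ℝ) := by exact_mod_cast hj1
  have hjd' : (j:ℝ) ≤ (d:ℝ) := by exact_mod_cast hjd
  have hd1 : (1:ℝ) ≤ (d:ℝ) := by exact_mod_cast hd
  have ht6 : 6 ≤ t := by rw [ht]; nlinarith
  have ht0 : 0 < t := by linarith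
  have htd : t ≤ 7 * d := by rw [ht]; nlinarith
  -- epsilon bounds
  have h3d : (1:ℝ) ≤ 3 * d := by linarith
  have h3d0 : (0:ℝ) < 3 * d := by linarith
  have h50d : (1:ℝ) ≤ 50 * d := by linarith
  have hε0 : 0 ≤ ε := by
    rw [hε]; positivity
  have hfac2 : ((50 * d : ℝ)) ^ (-(3 * (d : ℝ) ^ 2 / 2)) ≤ 1 := by
    apply Real.rpow_le_one_of_one_le_of_nonpos h50d
    nlinarith [sq_nonneg (d:ℝ)]
  have hfac1 : ((3 * d : ℝ)) ^ (-(12 * d : ℝ)) ≤ ((3 * d : ℝ)) ^ (-(12 : ℝ)) := by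
    apply Real.rpow_le_rpow_of_exponent_le h3d
    nlinarith
  have hfac1' : ((3 * d : ℝ)) ^ (-(12 : ℝ)) = ((3 * (d:ℝ)) ^ (12:ℕ))⁻¹ := by
    rw [Real.rpow_neg h3d0.le, ← Real.rpow_natCast (3 * (d:ℝ)) 12]
    norm_num
  have hd12 : (d:ℝ) ≤ (d:ℝ) ^ (12:ℕ) := le_self_pow₀ hd1 (by norm_num)
  have hε_le : ε ≤ ((3 * (d:ℝ)) ^ (12:ℕ))⁻¹ := by
    rw [hε]
    calc ((3 * d : ℝ)) ^ (-(12 * d : ℝ)) * ((50 * d : ℝ)) ^ (-(3 * (d : ℝ) ^ 2 / 2))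
        ≤ ((3 * d : ℝ)) ^ (-(12 * d : ℝ)) * 1 := by
          apply mul_le_mul_of_nonneg_left hfac2 (Real.rpow_nonneg h3d0.le _)
      _ = ((3 * d : ℝ)) ^ (-(12 * d : ℝ)) := mul_one _
      _ ≤ ((3 * (d:ℝ)) ^ (12:ℕ))⁻¹ := by rw [← hfac1']; exact hfac1
  have hpow0 : (0:ℝ) < (3 * (d:ℝ)) ^ (12:ℕ) := by positivity
  have hεt : t * ε ≤ 1 / 1000 := by
    have h1 : t * ε ≤ (7 * d) * ((3 * (d:ℝ)) ^ (12:ℕ))⁻¹ :=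
      mul_le_mul htd hε_le hε0 (by linarith)
    have h2 : (3 * (d:ℝ)) ^ (12:ℕ) = 3 ^ (12:ℕ) * (d:ℝ) ^ (12:ℕ) := by rw [mul_pow]
    have h3 : (7 * (d:ℝ)) * ((3 * (d:ℝ)) ^ (12:ℕ))⁻¹ ≤ 1 / 1000 := by
      rw [← div_eq_mul_inv, div_le_div_iff₀ hpow0 (by norm_num)]
      rw [h2]
      nlinarith [hd12, hd1]
    linarith
  have hεtε : ε ≤ 1 / (1000 * t) := by
    rw [le_div_iff₀ (by linarith)]
    linarith [hεt]
  have hg0 : 0 ≤ g := by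
    rw [hg]
    apply div_nonneg (by positivity)
    positivity
  have hRf : Rfun j = RT t := by
    funext x
    rw [Rfun, RT, ht]
  rcases m with _ | n
  · -- m = 0
    simp only [iteratedDeriv_zero, Nat.factorial_zero, pow_zero, Nat.cast_one, mul_one]
    have : ((0 + 3).choose 3 : ℝ) = 1 := by norm_num
    rw [this, one_mul, one_mul, hRf]
    exact RT_le ht6 hεt hε0 hg hw0 hwε
  · -- m = n + 1 ≥ 1
    set r : ℝ := 1 / (4 * t) with hr
    have hr0 : 0 < r := by rw [hr]; positivity
    -- points of the closed ball are small
    have hball : ∀ z : ℂ, z ∈ closedBall (w : ℂ) r → ‖z‖ ≤ 26 / (100 * t) := by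
      intro z hz
      rw [mem_closedBall] at hz
      have h1 : ‖z‖ ≤ ‖(w:ℂ)‖ + r := by
        have := norm_sub_norm_le z (w:ℂ)
        rw [← dist_eq_norm] at this
        linarith
      have h2 : ‖(w:ℂ)‖ = w := by
        rw [Complex.norm_real, Real.norm_eq_abs, _root_.abs_of_nonneg hw0]
      rw [h2] at h1
      have h3 : w + r ≤ 26 / (100 * t) := by
        have hw' : w ≤ 1 / (1000 * t) := hwε.trans hεtε
        have hsum : 1 / (1000 * t) + r = 251 / (1000 * t) := by
          rw [hr]; field_simp; ring
        have hcmp : (251:ℝ) / (1000 * t) ≤ 26 / (100 * t) := by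
          rw [div_le_div_iff₀ (by positivity) (by positivity)]
          nlinarith
        linarith
      linarith
    have hsubS : closedBall (w : ℂ) r ⊆ {z : ℂ | ‖z‖ < 27 / (100 * t)} := by
      intro z hz
      have h1 := hball z hz
      have h26 : (26:ℝ) / (100 * t) < 27 / (100 * t) := by
        rw [div_lt_div_iff₀ (by positivity) (by positivity)]
        nlinarith
      exact lt_of_le_of_lt h1 h26
    have hdiff : DifferentiableOn ℂ (Fc t) (closedBall (w : ℂ) r) := (Fc_diff ht6).mono hsubS
    have hM : ∀ z ∈ closedBall (w : ℂ) r, ‖Fc t z‖ ≤ 2 := fun z hz => Fc_bound ht6 (hball z hz)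
    have hcau := cauchy_est hr0 hdiff hM (n + 1)
    -- transfer from ℝ to ℂ
    have hwS : ((w : ℝ) : ℂ) ∈ Metric.ball (0 : ℂ) (27 / (100 * t)) := by
      rw [mem_ball_zero_iff, Complex.norm_real, Real.norm_eq_abs, _root_.abs_of_nonneg hw0]
      calc w ≤ 1 / (1000 * t) := hwε.trans hεtε
        _ < 27 / (100 * t) := by
            rw [div_lt_div_iff₀ (by positivity) (by positivity)]
            nlinarith
    have hFdiff2 : DifferentiableOn ℂ (Fc t) (Metric.ball (0 : ℂ) (27 / (100 * t))) :=
      (Fc_diff ht6).mono (fun z hz => by rwa [mem_ball_zero_iff] at hz)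
    have htrans := transfer_re isOpen_ball hFdiff2
      (fun x _ => by rw [← Fc_real ht6 x, Complex.ofReal_re]) (n + 1) w hwS
    rw [hRf, htrans]
    have hre : |(iteratedDeriv (n + 1) (Fc t) ↑w).re| ≤ ‖iteratedDeriv (n + 1) (Fc t) ↑w‖ :=
      Complex.abs_re_le_norm _
    have hrpow : r ^ (n + 1) = ((4 * t) ^ (n + 1))⁻¹ := by rw [hr, one_div, inv_pow]
    have hcau' : ‖iteratedDeriv (n + 1) (Fc t) ↑w‖ ≤
        ((n + 1).factorial : ℝ) * 2 * (4 * t) ^ (n + 1) := by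
      rw [hrpow, div_inv_eq_mul] at hcau
      exact hcau
    have hC4 : (4 : ℝ) ≤ (((n + 1) + 3).choose 3 : ℝ) := by
      have h1 : (4 : ℕ).choose 3 ≤ ((n + 1) + 3).choose 3 := Nat.choose_le_choose 3 (by omega)
      have h4 : (4 : ℕ).choose 3 = 4 := by decide
      exact_mod_cast h4 ▸ h1
    have hE1 : (1 : ℝ) ≤ Real.exp g := Real.one_le_exp hg0
    have hbase : ((4 * t) : ℝ) ^ (n + 1) ≤ (4 * Real.exp (2 * t * ε) * t) ^ (n + 1) := by
      apply pow_le_pow_left₀ (by positivity)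
      nlinarith [Real.one_le_exp (show (0:ℝ) ≤ 2 * t * ε by positivity)]
    calc |(iteratedDeriv (n + 1) (Fc t) ↑w).re|
        ≤ ((n + 1).factorial : ℝ) * 2 * (4 * t) ^ (n + 1) := hre.trans hcau'
      _ ≤ ((n + 1).factorial : ℝ) * (((n + 1) + 3).choose 3 : ℝ) * (4 * t) ^ (n + 1) := by
          gcongr
          linarith
      _ ≤ ((n + 1).factorial : ℝ) * (((n + 1) + 3).choose 3 : ℝ) *
          (Real.exp g * (4 * Real.exp (2 * t * ε) * t) ^ (n + 1)) := by
          have hstep : ((4 * t) : ℝ) ^ (n + 1) ≤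
              Real.exp g * (4 * Real.exp (2 * t * ε) * t) ^ (n + 1) :=
            hbase.trans (le_mul_of_one_le_left (by positivity) hE1)
          exact mul_le_mul_of_nonneg_left hstep (by positivity)
      _ = ((n + 1).factorial : ℝ) * (((n + 1) + 3).choose 3 : ℝ) * Real.exp g *
          (4 * Real.exp (2 * t * ε) * t) ^ (n + 1) := by ring
end

section
/- Let c := 2π²/3, let d be a positive integer, let 2 ≤ m ≤ d, and let i_1, …, i_{2m−2} be nonnegative integers with i_1 + ⋯ + i_{2m−2} = m(m−1). Then (√2/c)^{m(m−1)} · ∏_{k=1}^{2m−2} C(d, i_k) ≤ (e^{4e/c²})^{d²}. -/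
lemma choose_mul_choose_le_vander (a b p q : ℕ) :
    a.choose p * b.choose q ≤ (a + b).choose (p + q) := by
  rw [Nat.add_choose_eq]
  exact Finset.single_le_sum (f := fun ij : ℕ × ℕ => a.choose ij.1 * b.choose ij.2)
    (fun _ _ => Nat.zero_le _) (a := (p, q)) (Finset.HasAntidiagonal.mem_antidiagonal.mpr rfl)

lemma prod_choose_le_choose {ι : Type*} [DecidableEq ι] (d : ℕ) (f : ι → ℕ) (s : Finset ι) :
    ∏ k ∈ s, d.choose (f k) ≤ (s.card * d).choose (∑ k ∈ s, f k) := by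
  induction s using Finset.induction with
  | empty => simp
  | @insert a s ha ih =>
    rw [Finset.prod_insert ha, Finset.sum_insert ha, Finset.card_insert_of_notMem ha,
      add_mul, one_mul]
    calc d.choose (f a) * ∏ k ∈ s, d.choose (f k)
        ≤ d.choose (f a) * (s.card * d).choose (∑ k ∈ s, f k) :=
          Nat.mul_le_mul_left _ ih
      _ ≤ (d + s.card * d).choose (f a + ∑ k ∈ s, f k) := choose_mul_choose_le_vander ..
      _ = (s.card * d + d).choose (f a + ∑ k ∈ s, f k) := by rw [Nat.add_comm]

lemma pow_le_exp_mul_factorial (S : ℕ) : (S : ℝ) ^ S ≤ Real.exp 1 ^ S * S.factorial := by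
  have h := Real.pow_div_factorial_le_exp (x := (S : ℝ)) (Nat.cast_nonneg S) S
  have hf : (0 : ℝ) < S.factorial := by positivity
  rw [div_le_iff₀ hf] at h
  calc (S : ℝ) ^ S ≤ Real.exp S * S.factorial := h
    _ = Real.exp 1 ^ S * S.factorial := by rw [← Real.exp_nat_mul, mul_one]

lemma log_le_sq_div (y : ℝ) (hy : 0 < y) : Real.log y ≤ y ^ 2 / (2 * Real.exp 1) := by
  have he : (0 : ℝ) < Real.exp 1 := Real.exp_pos 1
  have h := Real.log_le_sub_one_of_pos (x := y ^ 2 / Real.exp 1) (by positivity)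
  rw [Real.log_div (by positivity) he.ne', Real.log_exp, Real.log_pow] at h
  have h2 : (2 : ℝ) * Real.log y ≤ y ^ 2 / Real.exp 1 := by push_cast at h; linarith
  rw [le_div_iff₀ (by positivity)] at h2
  rw [le_div_iff₀ (by positivity)]
  nlinarith

theorem binom_product_bound (d m : ℕ) (hd : 1 ≤ d) (hm2 : 2 ≤ m) (hmd : m ≤ d)
    (i : Fin (2 * m - 2) → ℕ) (hisum : ∑ k, i k = m * (m - 1)) :
    (Real.sqrt 2 / cconst) ^ (m * (m - 1)) * ∏ k, (d.choose (i k) : ℝ) ≤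
      (Real.exp (4 * Real.exp 1 / cconst ^ 2)) ^ (d ^ 2) := by
  have hpi := Real.pi_gt_three
  have hc : (0 : ℝ) < cconst := by unfold cconst; nlinarith
  have hS : 0 < m * (m - 1) := Nat.mul_pos (by omega) (by omega)
  set S := m * (m - 1) with hSdef
  have he : (0 : ℝ) < Real.exp 1 := Real.exp_pos 1
  have hsqrt2 : (0 : ℝ) < Real.sqrt 2 := by positivity
  have hdR : (0 : ℝ) < (d : ℝ) := by exact_mod_cast hd
  have hSR : (0 : ℝ) < (S : ℝ) := by exact_mod_cast hS
  -- Step A: product of binomials ≤ single binomial (Vandermonde)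
  have hA : ∏ k, (d.choose (i k) : ℝ) ≤ (((2 * m - 2) * d).choose S : ℝ) := by
    have h := prod_choose_le_choose d i Finset.univ
    rw [Finset.card_univ, Fintype.card_fin, hisum] at h
    rw [← Nat.cast_prod]
    exact_mod_cast h
  have hm1 : ((2 * m - 2 : ℕ) : ℝ) = 2 * (m:ℝ) - 2 := by
    have h : (2 * m - 2 : ℕ) = 2 * (m - 1) := by omega
    rw [h]; push_cast [Nat.cast_sub (show 1 ≤ m by omega)]; ring
  have h2m2 : (0:ℝ) < 2 * (m:ℝ) - 2 := by
    have : (2:ℝ) ≤ (m:ℝ) := by exact_mod_cast hm2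
    linarith
  -- Step B: binomial bound via d^S/S! and S^S ≤ e^S S!
  have hB : (((2 * m - 2) * d).choose S : ℝ) ≤
      (Real.exp 1 * (((2 * m - 2) * d : ℕ) : ℝ) / S) ^ S := by
    have h1 : (((2 * m - 2) * d).choose S : ℝ) ≤ (((2 * m - 2) * d : ℕ) : ℝ) ^ S / S.factorial :=
      Nat.choose_le_pow_div S _
    have hf : (0 : ℝ) < S.factorial := by positivity
    have h2 := pow_le_exp_mul_factorial S
    calc (((2 * m - 2) * d).choose S : ℝ) ≤ (((2 * m - 2) * d : ℕ) : ℝ) ^ S / S.factorial := h1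
      _ ≤ (((2 * m - 2) * d : ℕ) : ℝ) ^ S * (Real.exp 1 ^ S / (S : ℝ) ^ S) := by
          rw [div_eq_mul_inv]
          refine mul_le_mul_of_nonneg_left ?_ (by positivity)
          rw [inv_le_iff_one_le_mul₀ hf, div_mul_eq_mul_div, le_div_iff₀ (by positivity), one_mul]
          exact h2
      _ = (Real.exp 1 * (((2 * m - 2) * d : ℕ) : ℝ) / S) ^ S := by
          rw [div_pow, mul_pow]; ring
  -- combine
  set y : ℝ := Real.sqrt 2 / cconst * (Real.exp 1 * (((2 * m - 2) * d : ℕ) : ℝ) / S) with hy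
  have hXpos : (0:ℝ) < (((2 * m - 2) * d : ℕ) : ℝ) := by
    have : 0 < (2 * m - 2) * d := Nat.mul_pos (by omega) hd
    exact_mod_cast this
  have hy0 : 0 < y := by
    rw [hy]
    exact mul_pos (by positivity) (div_pos (by positivity) hSR)
  have hmain : (Real.sqrt 2 / cconst) ^ S * ∏ k, (d.choose (i k) : ℝ) ≤ y ^ S := by
    rw [hy, mul_pow]
    exact mul_le_mul_of_nonneg_left (hA.trans hB) (by positivity)
  refine hmain.trans ?_
  -- RHS as single exponential
  have hrhs : (Real.exp (4 * Real.exp 1 / cconst ^ 2)) ^ (d ^ 2)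
      = Real.exp ((d ^ 2 : ℕ) * (4 * Real.exp 1 / cconst ^ 2)) :=
    (Real.exp_nat_mul _ _).symm
  rw [hrhs]
  have hrpos : (0:ℝ) ≤ ((d ^ 2 : ℕ) : ℝ) * (4 * Real.exp 1 / cconst ^ 2) := by positivity
  by_cases hy1 : y ≤ 1
  · calc y ^ S ≤ 1 ^ S := pow_le_pow_left₀ hy0.le hy1 S
      _ = 1 := one_pow S
      _ ≤ _ := Real.one_le_exp hrpos
  · push_neg at hy1
    have hlogy : 0 ≤ Real.log y := Real.log_nonneg hy1.le
    have hSm2 : S ≤ m ^ 2 := by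
      calc S = m * (m-1) := rfl
        _ ≤ m * m := Nat.mul_le_mul_left m (Nat.sub_le m 1)
        _ = m ^ 2 := (sq m).symm
    -- the key algebraic identity: m * y = √2/c * (2 e d)
    have hSc : ((S : ℕ) : ℝ) = (m : ℝ) * ((m:ℝ) - 1) := by
      rw [hSdef]; push_cast [Nat.cast_sub (by omega : 1 ≤ m)]; ring
    have hm1ne : ((m:ℝ) - 1) ≠ 0 := by
      have : (2:ℝ) ≤ (m:ℝ) := by exact_mod_cast hm2
      linarith
    have hmne : ((m:ℝ)) ≠ 0 := by positivity
    have hmy : (m : ℝ) * y = Real.sqrt 2 / cconst * (2 * Real.exp 1 * d) := by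
      rw [hy, hSc, Nat.cast_mul, hm1]
      field_simp
    have h2 : ((m:ℝ) * y) ^ 2 = 2 / cconst ^ 2 * (2 * Real.exp 1 * (d:ℝ)) ^ 2 := by
      rw [hmy, mul_pow, div_pow, Real.sq_sqrt (by norm_num : (0:ℝ) ≤ 2)]
    have key : ((m:ℝ)) ^ 2 * Real.log y ≤ ((d:ℝ)) ^ 2 * (4 * Real.exp 1 / cconst ^ 2) := by
      calc ((m:ℝ)) ^ 2 * Real.log y
          ≤ ((m:ℝ)) ^ 2 * (y ^ 2 / (2 * Real.exp 1)) :=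
            mul_le_mul_of_nonneg_left (log_le_sq_div y hy0) (by positivity)
        _ = ((m:ℝ) * y) ^ 2 / (2 * Real.exp 1) := by ring
        _ = ((d:ℝ)) ^ 2 * (4 * Real.exp 1 / cconst ^ 2) := by
            rw [h2]; field_simp; ring
    calc y ^ S ≤ y ^ (m ^ 2) := pow_le_pow_right₀ hy1.le hSm2
      _ = Real.exp ((m ^ 2 : ℕ) * Real.log y) := by
          rw [← Real.exp_log hy0, ← Real.exp_nat_mul, Real.exp_log hy0]
      _ ≤ Real.exp (((d ^ 2 : ℕ) : ℝ) * (4 * Real.exp 1 / cconst ^ 2)) := by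
          apply Real.exp_le_exp.mpr
          push_cast
          push_cast at key
          linarith
end

section
/- Let d ≥ 2, let λ_1, …, λ_d be the d (distinct, real) roots of the Hermite polynomial H_d(X). Then for every m with 2 ≤ m ≤ d, one has Σ_{1 ≤ i_1 < ⋯ < i_m ≤ d} ∏_{1 ≤ a < b ≤ m} (λ_{i_a} − λ_{i_b})² ≥ 1. -/
/-- The Hermite polynomial `H_d(X) = ∑_{k ≤ d/2} (-1)^k d!/(k!(d-2k)!) X^(d-2k)`,
normalized by the generating function `e^{tX - t²} = ∑ H_d(X) t^d/d!`. -/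
noncomputable def hermiteH (d : ℕ) : Polynomial ℝ :=
  ∑ k ∈ Finset.range (d / 2 + 1),
    Polynomial.C ((-1 : ℝ) ^ k * (d.factorial : ℝ) /
      ((k.factorial : ℝ) * ((d - 2 * k).factorial : ℝ))) * Polynomial.X ^ (d - 2 * k)


noncomputable def hermiteZ (d : ℕ) : Polynomial ℤ :=
  ∑ k ∈ Finset.range (d / 2 + 1),
    Polynomial.C ((-1 : ℤ) ^ k * (d.choose (2*k) * ((2*k).choose k) * k.factorial : ℕ)) *
      Polynomial.X ^ (d - 2 * k)

lemma fact_eq (d k : ℕ) (h : 2*k ≤ d) :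
    d.factorial = d.choose (2*k) * ((2*k).choose k) * k.factorial * (k.factorial * (d - 2*k).factorial) := by
  have h1 := Nat.choose_mul_factorial_mul_factorial h
  have h2 := Nat.choose_mul_factorial_mul_factorial (Nat.le_mul_of_pos_left k (by norm_num) : k ≤ 2*k)
  have h3 : 2*k - k = k := by omega
  rw [h3] at h2
  calc d.factorial = d.choose (2*k) * (2*k).factorial * (d - 2*k).factorial := h1.symm
    _ = _ := by rw [← h2]; ring

lemma hermiteH_eq (d : ℕ) : hermiteH d = (hermiteZ d).map (Int.castRingHom ℝ) := by
  rw [hermiteZ, hermiteH, Polynomial.map_sum]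
  refine Finset.sum_congr rfl fun k hk => ?_
  rw [Finset.mem_range] at hk
  have h2k : 2*k ≤ d := by
    have : k ≤ d/2 := by omega
    omega
  rw [Polynomial.map_mul, Polynomial.map_pow, Polynomial.map_X, Polynomial.map_C]
  congr 1
  have key : ((-1:ℝ) ^ k * (d.factorial : ℝ) / ((k.factorial : ℝ) * ((d - 2*k).factorial : ℝ)))
      = (((-1:ℤ) ^ k * (d.choose (2*k) * ((2*k).choose k) * k.factorial : ℕ) : ℤ) : ℝ) := by
    have hk0 : (k.factorial : ℝ) ≠ 0 := Nat.cast_ne_zero.2 (Nat.factorial_ne_zero _)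
    have hdk0 : ((d-2*k).factorial : ℝ) ≠ 0 := Nat.cast_ne_zero.2 (Nat.factorial_ne_zero _)
    rw [div_eq_iff (by positivity)]
    push_cast
    rw [fact_eq d k h2k]
    push_cast
    ring
  rw [key, eq_intCast]

lemma hermiteH_coeff_d (d : ℕ) : (hermiteH d).coeff d = 1 := by
  rw [hermiteH, Polynomial.finset_sum_coeff]
  rw [Finset.sum_eq_single 0]
  · simp [Nat.factorial_ne_zero]
  · intro k hk hk0
    rw [Finset.mem_range] at hk
    have h2k : 2*k ≤ d := by omega
    rw [Polynomial.coeff_C_mul, Polynomial.coeff_X_pow, if_neg (by omega), mul_zero]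
  · intro h; simp at h

lemma hermiteH_natDegree_le (d : ℕ) : (hermiteH d).natDegree ≤ d := by
  rw [hermiteH]
  refine (Polynomial.natDegree_sum_le _ _).trans ?_
  simp only [Finset.fold_max_le]
  refine ⟨by omega, fun k _ => ?_⟩
  refine (Polynomial.natDegree_C_mul_le _ _).trans ?_
  simp [Polynomial.natDegree_X_pow]

lemma hermiteH_monic (d : ℕ) : (hermiteH d).Monic :=
  Polynomial.monic_of_natDegree_le_of_coeff_eq_one d (hermiteH_natDegree_le d) (hermiteH_coeff_d d)

lemma hermiteH_natDegree (d : ℕ) : (hermiteH d).natDegree = d := by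
  refine le_antisymm (hermiteH_natDegree_le d) ?_
  exact Polynomial.le_natDegree_of_ne_zero (by rw [hermiteH_coeff_d]; norm_num)
section
variable {d : ℕ} {lam : Fin d → ℝ} {p : Polynomial ℝ}

lemma roots_eq (hm : p.Monic) (hdeg : p.natDegree = d)
    (hinj : Function.Injective lam) (hroot : ∀ a : Fin d, p.eval (lam a) = 0) :
    p.roots = Finset.univ.val.map lam := by
  have hp0 : p ≠ 0 := hm.ne_zero
  have hle : Finset.univ.val.map lam ≤ p.roots := by
    rw [Multiset.le_iff_subset (Finset.univ.nodup.map hinj)]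
    intro x hx
    obtain ⟨a, _, rfl⟩ := Multiset.mem_map.mp hx
    rw [Polynomial.mem_roots hp0]
    exact hroot a
  refine (Multiset.eq_of_le_of_card_le hle ?_).symm
  calc Multiset.card p.roots ≤ p.natDegree := p.card_roots'
    _ = Multiset.card (Finset.univ.val.map lam) := by simp [hdeg]

lemma p_eq_prod (hm : p.Monic) (hdeg : p.natDegree = d)
    (hinj : Function.Injective lam) (hroot : ∀ a : Fin d, p.eval (lam a) = 0) :
    ((Finset.univ.val.map lam).map fun a => Polynomial.X - Polynomial.C a).prod = p := by
  rw [← roots_eq hm hdeg hinj hroot]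
  refine Polynomial.prod_multiset_X_sub_C_of_monic_of_roots_card_eq hm ?_
  rw [roots_eq hm hdeg hinj hroot]; simp [hdeg]

-- esymm values are integer casts
lemma esymm_int (hm : p.Monic) (hdeg : p.natDegree = d)
    (hinj : Function.Injective lam) (hroot : ∀ a : Fin d, p.eval (lam a) = 0)
    (hZ : ∀ k, ∃ z : ℤ, p.coeff k = (z : ℝ)) (n : ℕ) :
    ∃ z : ℤ, (Finset.univ.val.map lam).esymm n = (z : ℝ) := by
  rcases le_or_gt n d with h | h
  · have hcard : Multiset.card (Finset.univ.val.map lam) = d := by simp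
    have := Multiset.prod_X_sub_C_coeff (Finset.univ.val.map lam)
      (k := d - n) (by rw [hcard]; omega)
    rw [p_eq_prod hm hdeg hinj hroot, hcard] at this
    have hdn : d - (d - n) = n := by omega
    rw [hdn] at this
    obtain ⟨z, hz⟩ := hZ (d - n)
    refine ⟨(-1)^n * z, ?_⟩
    have : (Finset.univ.val.map lam).esymm n = (-1:ℝ)^n * p.coeff (d-n) := by
      rw [this]; rw [← mul_assoc, ← pow_add]; simp [pow_mul]
    rw [this, hz]; push_cast; ring
  · refine ⟨0, ?_⟩
    rw [Multiset.esymm, Multiset.powersetCard_eq_empty]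
    · simp
    · simp; omega
end
open Finset

variable {R : Type*} [CommRing R] {ι : Type*} [DecidableEq ι]

lemma card_filter_lt {d : ℕ} (s : Finset (Fin d)) :
    (s.offDiag.filter (fun q => q.1 < q.2)).card * 2 = s.card * (s.card - 1) := by
  have hsplit := Finset.card_filter_add_card_filter_not
    (s := s.offDiag) (p := fun q => q.1 < q.2)
  have hbij : (s.offDiag.filter (fun q => q.1 < q.2)).card
      = (s.offDiag.filter (fun q => ¬ q.1 < q.2)).card := by
    refine Finset.card_nbij' (fun q => (q.2, q.1)) (fun q => (q.2, q.1)) ?_ ?_ ?_ ?_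
    · intro q hq
      simp only [Finset.mem_coe, Finset.mem_filter, Finset.mem_offDiag] at hq ⊢
      exact ⟨⟨hq.1.2.1, hq.1.1, (Ne.symm hq.1.2.2)⟩, by omega⟩
    · intro q hq
      simp only [Finset.mem_coe, Finset.mem_filter, Finset.mem_offDiag] at hq ⊢
      refine ⟨⟨hq.1.2.1, hq.1.1, (Ne.symm hq.1.2.2)⟩, ?_⟩
      rcases lt_or_gt_of_ne hq.1.2.2 with h | h
      · exact absurd h hq.2
      · exact h
    · intro q _; rfl
    · intro q _; rfl
  have hoff : s.offDiag.card = s.card * s.card - s.card := Finset.offDiag_card s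
  have h2 : (s.offDiag.filter (fun q => q.1 < q.2)).card * 2 = s.offDiag.card := by omega
  rw [h2, hoff, Nat.mul_sub, mul_one]

lemma prod_sq_eq {d : ℕ} (s : Finset (Fin d)) (f : Fin d → R) :
    ∏ q ∈ s.offDiag.filter (fun q => q.1 < q.2), (f q.1 - f q.2) ^ 2
      = (-1) ^ (s.card * (s.card - 1) / 2) * ∏ q ∈ s.offDiag, (f q.1 - f q.2) := by
  have hN : s.card * (s.card - 1) / 2 = (s.offDiag.filter (fun q => q.1 < q.2)).card := by
    have := card_filter_lt s; omega
  rw [hN]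
  rw [← Finset.prod_filter_mul_prod_filter_not s.offDiag (fun q => q.1 < q.2)]
  have hswap : ∏ q ∈ s.offDiag.filter (fun q => ¬ q.1 < q.2), (f q.1 - f q.2)
      = ∏ q ∈ s.offDiag.filter (fun q => q.1 < q.2), (f q.2 - f q.1) := by
    refine Finset.prod_nbij' (fun q => (q.2, q.1)) (fun q => (q.2, q.1)) ?_ ?_ ?_ ?_ ?_
    · intro q hq
      simp only [Finset.mem_filter, Finset.mem_offDiag] at hq ⊢
      refine ⟨⟨hq.1.2.1, hq.1.1, (Ne.symm hq.1.2.2)⟩, ?_⟩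
      rcases lt_or_gt_of_ne hq.1.2.2 with h | h
      · exact absurd h hq.2
      · exact h
    · intro q hq
      simp only [Finset.mem_filter, Finset.mem_offDiag] at hq ⊢
      exact ⟨⟨hq.1.2.1, hq.1.1, (Ne.symm hq.1.2.2)⟩, by omega⟩
    · intro q _; rfl
    · intro q _; rfl
    · intro q _; rfl
  rw [hswap]
  have : ∏ q ∈ s.offDiag.filter (fun q => q.1 < q.2), (f q.2 - f q.1)
      = (-1) ^ (s.offDiag.filter (fun q => q.1 < q.2)).card
        * ∏ q ∈ s.offDiag.filter (fun q => q.1 < q.2), (f q.1 - f q.2) := by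
    rw [← Finset.prod_const, ← Finset.prod_mul_distrib]
    exact Finset.prod_congr rfl fun q _ => by ring
  rw [this, Finset.prod_pow]
  set N := (s.offDiag.filter (fun q => q.1 < q.2)).card with hNdef
  set P := ∏ q ∈ s.offDiag.filter (fun q => q.1 < q.2), (f q.1 - f q.2) with hPdef
  have h1 : ((-1:R) ^ N) ^ 2 = 1 := by
    rw [← pow_mul, mul_comm, pow_mul, neg_one_sq, one_pow]
  linear_combination (-(P^2)) * h1
open Finset MvPolynomial

noncomputable def P0 (d m : ℕ) : MvPolynomial (Fin d) ℤ :=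
  ∑ s ∈ Finset.powersetCard m (Finset.univ : Finset (Fin d)),
    ∏ q ∈ s.offDiag, (X q.1 - X q.2)

lemma P0_symm (d m : ℕ) : (P0 d m).IsSymmetric := by
  intro σ
  rw [P0, map_sum]
  rw [show (∑ s ∈ Finset.powersetCard m (Finset.univ : Finset (Fin d)),
      rename σ (∏ q ∈ s.offDiag, (X q.1 - X q.2)))
    = ∑ s ∈ Finset.powersetCard m (Finset.univ : Finset (Fin d)),
      ∏ q ∈ (s.image σ).offDiag, (X q.1 - X q.2) from ?_]
  · refine Finset.sum_nbij' (fun s => s.image σ) (fun s => s.image σ.symm) ?_ ?_ ?_ ?_ ?_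
    · intro s hs
      simp only [Finset.mem_powersetCard_univ] at hs ⊢
      rw [Finset.card_image_of_injective _ σ.injective, hs]
    · intro s hs
      simp only [Finset.mem_powersetCard_univ] at hs ⊢
      rw [Finset.card_image_of_injective _ σ.symm.injective, hs]
    · intro s _; simp [Finset.image_image]
    · intro s _; simp [Finset.image_image]
    · intro s _; rfl
  · refine Finset.sum_congr rfl fun s _ => ?_
    rw [map_prod]
    simp only [map_sub, rename_X]
    refine Finset.prod_nbij' (fun q => (σ q.1, σ q.2)) (fun q => (σ.symm q.1, σ.symm q.2))
      ?_ ?_ ?_ ?_ ?_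
    · intro q hq
      simp only [Finset.mem_offDiag, Finset.mem_image] at hq ⊢
      exact ⟨⟨q.1, hq.1, rfl⟩, ⟨q.2, hq.2.1, rfl⟩, fun h => hq.2.2 (σ.injective h)⟩
    · intro q hq
      simp only [Finset.mem_offDiag, Finset.mem_image] at hq ⊢
      obtain ⟨⟨a, ha, hae⟩, ⟨b, hb, hbe⟩, hne⟩ := hq
      rw [← hae, ← hbe]
      simp only [Equiv.symm_apply_apply]
      exact ⟨ha, hb, fun h => hne (by rw [← hae, ← hbe, h])⟩
    · intro q _; simp
    · intro q _; simp
    · intro q _; rfl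

-- integer evaluation
lemma aeval_int {ι : Type*} (Q : MvPolynomial ι ℤ) (w : ι → ℤ) :
    (aeval (R := ℤ) (fun i => (w i : ℝ))) Q = ((eval w Q : ℤ) : ℝ) := by
  rw [aeval_def]
  have := MvPolynomial.eval₂_comp_left (Int.castRingHom ℝ) (RingHom.id ℤ) w Q
  rw [MvPolynomial.eval, coe_eval₂Hom]
  rw [show ((eval₂ (RingHom.id ℤ) w Q : ℤ) : ℝ) = (Int.castRingHom ℝ) (eval₂ (RingHom.id ℤ) w Q) from rfl, this]
  simp only [algebraMap_int_eq, RingHom.comp_id]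
  rfl

lemma P0_eval_int {d m : ℕ} (lam : Fin d → ℝ)
    (hes : ∀ n : ℕ, ∃ z : ℤ, (Finset.univ.val.map lam).esymm n = (z : ℝ)) :
    ∃ z : ℤ, (aeval (R := ℤ) lam) (P0 d m) = (z : ℝ) := by
  obtain ⟨Q, hQ⟩ := esymmAlgHom_surjective (σ := Fin d) (R := ℤ) (n := d)
    (by simp) ⟨P0 d m, P0_symm d m⟩
  have hQ' : aeval (fun i : Fin d => esymm (Fin d) ℤ ((i : ℕ) + 1)) Q = P0 d m := by
    have := congrArg Subtype.val hQ
    rwa [esymmAlgHom_apply] at this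
  choose z hz using hes
  refine ⟨eval (fun i : Fin d => z ((i : ℕ) + 1)) Q, ?_⟩
  rw [← hQ']
  have hcomp : (aeval (R := ℤ) lam) (aeval (fun i : Fin d => esymm (Fin d) ℤ ((i : ℕ) + 1)) Q)
      = aeval (R := ℤ) (fun i : Fin d => (aeval (R := ℤ) lam) (esymm (Fin d) ℤ ((i : ℕ) + 1))) Q := by
    rw [← AlgHom.comp_apply, MvPolynomial.comp_aeval]
  rw [hcomp]
  have : (fun i : Fin d => (aeval (R := ℤ) lam) (esymm (Fin d) ℤ ((i : ℕ) + 1)))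
      = fun i : Fin d => ((z ((i : ℕ) + 1) : ℤ) : ℝ) := by
    funext i
    rw [aeval_esymm_eq_multiset_esymm, hz]
  rw [this, aeval_int]

theorem hermite_hankel_ge_one (d : ℕ) (hd : 2 ≤ d) (lam : Fin d → ℝ)
    (hinj : Function.Injective lam)
    (hroot : ∀ a : Fin d, (hermiteH d).eval (lam a) = 0)
    (m : ℕ) (hm2 : 2 ≤ m) (hmd : m ≤ d) :
    1 ≤ ∑ s ∈ Finset.powersetCard m (Finset.univ : Finset (Fin d)),
        ∏ q ∈ s.offDiag.filter (fun q => q.1 < q.2), (lam q.1 - lam q.2) ^ 2 := by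
  set S := ∑ s ∈ Finset.powersetCard m (Finset.univ : Finset (Fin d)),
        ∏ q ∈ s.offDiag.filter (fun q => q.1 < q.2), (lam q.1 - lam q.2) ^ 2 with hS
  -- S is positive
  have hSpos : 0 < S := by
    rw [hS]
    refine Finset.sum_pos (fun s hs => ?_) ?_
    · refine Finset.prod_pos fun q hq => ?_
      rw [Finset.mem_filter, Finset.mem_offDiag] at hq
      have h0 : lam q.1 - lam q.2 ≠ 0 := sub_ne_zero.mpr fun h => hq.1.2.2 (hinj h)
      positivity
    · obtain ⟨t, _, ht⟩ := Finset.exists_subset_card_eq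
        (show m ≤ (Finset.univ : Finset (Fin d)).card by simpa using hmd)
      exact ⟨t, Finset.mem_powersetCard_univ.mpr ht⟩
  -- S equals (-1)^N times the evaluation of P0
  have hSA : S = (-1 : ℝ) ^ (m * (m-1) / 2) * (aeval (R := ℤ) lam) (P0 d m) := by
    rw [hS, P0, map_sum, Finset.mul_sum]
    refine Finset.sum_congr rfl fun s hs => ?_
    have hcard : s.card = m := (Finset.mem_powersetCard_univ.mp hs)
    rw [prod_sq_eq s lam, hcard, map_prod]
    simp only [map_sub, aeval_X]
  -- the evaluation of P0 is an integer
  have hes : ∀ n : ℕ, ∃ z : ℤ, (Finset.univ.val.map lam).esymm n = (z : ℝ) := by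
    refine fun n => esymm_int (hermiteH_monic d) (hermiteH_natDegree d) hinj hroot ?_ n
    intro k
    exact ⟨(hermiteZ d).coeff k, by rw [hermiteH_eq, Polynomial.coeff_map]; simp⟩
  obtain ⟨z, hz⟩ := P0_eval_int lam hes
  have hSz : S = (((-1 : ℤ) ^ (m * (m-1) / 2) * z : ℤ) : ℝ) := by
    rw [hSA, hz]; push_cast; ring
  rw [hSz]
  rw [hSz] at hSpos
  have : (0 : ℤ) < (-1) ^ (m * (m-1) / 2) * z := by exact_mod_cast hSpos
  exact_mod_cast this
end

section
/- Let t ≥ 1 be a real number. Then for every integer n ≥ 1 and every real w ≥ 0, the n-th derivative of w ↦ √(1 + t w²) satisfies |∂_w^n √(1 + t w²)| ≤ n! · e^{2tw} · t^n. -/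
open Finset Complex


noncomputable def cp' : ℕ → ℝ
  | 0 => 1
  | 1 => 1/2
  | (k+2) => cp' (k+1) * (k + 1/2) / (k+2)

lemma cp'_nonneg : ∀ k, 0 ≤ cp' k
  | 0 => by norm_num [cp']
  | 1 => by norm_num [cp']
  | (k+2) => by
      have := cp'_nonneg (k+1)
      unfold cp'
      positivity

lemma cp'_succ_le : ∀ k, cp' (k+1) ≤ cp' k
  | 0 => by norm_num [cp']
  | (k+1) => by
      have h := cp'_nonneg (k+1)
      show cp' (k+1) * (k + 1/2) / (k+2) ≤ cp' (k+1)
      rw [div_le_iff₀ (by positivity)]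
      nlinarith

lemma cp'_anti {m n : ℕ} (h : m ≤ n) : cp' n ≤ cp' m := by
  induction n with
  | zero => simp_all
  | succ k ih =>
    rcases Nat.eq_or_lt_of_le h with rfl | h'
    · rfl
    · exact (cp'_succ_le k).trans (ih (Nat.lt_succ_iff.mp h'))

lemma sum_cp' (m : ℕ) : ∑ k ∈ range m, cp' (k+1) = 1 - 2*(m+1)*cp' (m+1) := by
  induction m with
  | zero => norm_num [cp']
  | succ m ih =>
    rw [Finset.sum_range_succ, ih]
    have hstep : cp' (m+2) = cp' (m+1) * (m + 1/2) / (m+2) := rfl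
    have h2 : (m:ℝ)+2 ≠ 0 := by positivity
    push_cast
    rw [hstep]
    field_simp
    ring

lemma sum_cp'_le (m : ℕ) : ∑ k ∈ range m, cp' (k+1) ≤ 1 := by
  rw [sum_cp']
  have h := cp'_nonneg (m+1)
  nlinarith [cp'_nonneg (m+1)]

lemma conv_cp'_le (n : ℕ) : ∑ k ∈ range (n+1), cp' k * cp' (n-k) ≤ 1 := by
  match n with
  | 0 => norm_num [cp']
  | 1 =>
    rw [Finset.sum_range_succ, Finset.sum_range_succ, Finset.sum_range_zero]
    norm_num [cp']
  | (m+2) =>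
    rw [Finset.sum_range_succ, Finset.sum_range_succ']
    have h1 : ∑ k ∈ range (m+1), cp' (k+1) * cp' (m+2-(k+1)) ≤ 1/2 := by
      have : ∀ k ∈ range (m+1), cp' (k+1) * cp' (m+2-(k+1)) ≤ cp' (k+1) * (1/2) := by
        intro k hk
        have hk' : k ≤ m := Nat.lt_succ_iff.mp (Finset.mem_range.mp hk)
        have h2 : 1 ≤ m+2-(k+1) := by omega
        have := cp'_anti h2
        have := cp'_nonneg (k+1)
        have hcp'1 : cp' 1 = 1/2 := by norm_num [cp']
        nlinarith
      calc ∑ k ∈ range (m+1), cp' (k+1) * cp' (m+2-(k+1))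
          ≤ ∑ k ∈ range (m+1), cp' (k+1) * (1/2) := Finset.sum_le_sum this
        _ = (∑ k ∈ range (m+1), cp' (k+1)) * (1/2) := by rw [← Finset.sum_mul]
        _ ≤ 1 * (1/2) := by nlinarith [sum_cp'_le (m+1)]
        _ = 1/2 := by norm_num
    have h2 : cp' (m+2) ≤ 1/8 := by
      have := cp'_anti (show 2 ≤ m+2 by omega)
      have : cp' 2 = 1/8 := by norm_num [cp']
      linarith [cp'_anti (show 2 ≤ m+2 by omega)]
    have h0 : cp' 0 = 1 := by norm_num [cp']
    simp only [Nat.sub_self, Nat.sub_zero, h0]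
    nlinarith [cp'_nonneg (m+2)]

noncomputable def Acoef (n : ℕ) : ℂ := ∏ j ∈ range n, ((1/2 : ℂ) - j)

lemma abs_Acoef : ∀ n, ‖Acoef n‖ = n.factorial * cp' n
  | 0 => by simp [Acoef, cp']
  | 1 => by
      simp [Acoef, cp']
  | (n+2) => by
      have ih := abs_Acoef (n+1)
      have h1 : Acoef (n+2) = Acoef (n+1) * ((1/2 : ℂ) - (n+1 : ℕ)) := by
        rw [Acoef, Finset.prod_range_succ]; rfl
      have h2 : ((1/2 : ℂ) - ((n+1 : ℕ) : ℂ)) = ((1/2 - (n+1) : ℝ) : ℂ) := by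
        push_cast; ring
      rw [h1, norm_mul, ih, h2, Complex.norm_real, Real.norm_eq_abs]
      have h3 : |1/2 - ((n:ℝ)+1)| = (n + 1/2) := by
        rw [abs_of_nonpos (by linarith)]; ring
      have h4 : cp' (n+2) = cp' (n+1) * (n + 1/2) / (n+2) := rfl
      have hf : (((n+2).factorial : ℕ) : ℝ) = ((n:ℝ)+2) * ((n+1).factorial : ℕ) := by
        rw [Nat.factorial_succ]; push_cast; ring
      rw [h3, h4, hf]
      field_simp

lemma iter_cpow (c : ℂ) (n : ℕ) :
    ∀ z : ℂ, (z + c).im ≠ 0 →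
      iteratedDeriv n (fun y : ℂ => (y + c) ^ (1/2 : ℂ)) z
        = Acoef n * (z + c) ^ ((1/2 : ℂ) - n) := by
  induction n with
  | zero => intro z hz; simp [Acoef]
  | succ n ih =>
    intro z hz
    have hV : IsOpen {y : ℂ | (y + c).im ≠ 0} :=
      isOpen_ne.preimage ((Complex.continuous_im).comp (continuous_id.add continuous_const))
    rw [iteratedDeriv_succ]
    have h1 : iteratedDeriv n (fun y : ℂ => (y + c) ^ (1/2 : ℂ))
        =ᶠ[nhds z] fun y => Acoef n * (y + c) ^ ((1/2 : ℂ) - n) :=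
      Filter.eventuallyEq_of_mem (hV.mem_nhds hz) (fun y hy => ih y hy)
    rw [h1.deriv_eq]
    have hd : HasDerivAt (fun y : ℂ => (y + c) ^ ((1/2 : ℂ) - n))
        ((((1/2 : ℂ) - n) * (z + c) ^ ((1/2 : ℂ) - n - 1)) * 1) z :=
      ((hasDerivAt_id z).add_const c).cpow_const (Or.inr hz)
    rw [(hd.const_mul (Acoef n)).deriv]
    have hA : Acoef (n+1) = Acoef n * ((1/2 : ℂ) - n) := by
      rw [Acoef, Finset.prod_range_succ]; rfl
    have he : ((1/2 : ℂ) - n) - 1 = (1/2 : ℂ) - (n+1 : ℕ) := by push_cast; ring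
    rw [he] at hd ⊢
    rw [hA]
    ring

lemma abs_iter_cpow (c : ℂ) (k : ℕ) (z : ℂ) (hz : (z + c).im ≠ 0) :
    ‖iteratedDeriv k (fun y : ℂ => (y + c) ^ (1/2 : ℂ)) z‖
      = k.factorial * cp' k * ‖z + c‖ ^ ((1:ℝ)/2 - k) := by
  rw [iter_cpow c k z hz, norm_mul, abs_Acoef]
  have hne : z + c ≠ 0 := fun h => hz (by simp [h])
  rw [Complex.norm_cpow_of_ne_zero hne]
  have h1 : ((1/2 : ℂ) - k).re = (1:ℝ)/2 - k := by simp
  have h2 : ((1/2 : ℂ) - k).im = 0 := by simp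
  rw [h1, h2]
  simp

lemma complex_bound (a : ℝ) (ha : 0 < a) (n : ℕ) (hn : 1 ≤ n) (w : ℝ) :
    ‖iteratedDeriv n
        (fun z : ℂ => (z + -(↑a*I)) ^ (1/2:ℂ) * (z + ↑a*I) ^ (1/2:ℂ)) ↑w‖
      ≤ n.factorial * a ^ ((1:ℝ) - n) := by
  set g₁ : ℂ → ℂ := fun z => (z + -(↑a*I)) ^ (1/2:ℂ) with hg₁def
  set g₂ : ℂ → ℂ := fun z => (z + ↑a*I) ^ (1/2:ℂ) with hg₂def
  set V : Set ℂ := {z : ℂ | (z + -(↑a*I)).im ≠ 0} ∩ {z : ℂ | (z + ↑a*I).im ≠ 0} with hVdef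
  have hV : IsOpen V := by
    apply IsOpen.inter
    · exact isOpen_ne.preimage ((Complex.continuous_im).comp (continuous_id.add continuous_const))
    · exact isOpen_ne.preimage ((Complex.continuous_im).comp (continuous_id.add continuous_const))
  have hwV : (↑w : ℂ) ∈ V := by
    constructor <;> simp [ha.ne', Set.mem_setOf_eq]
  have hana : ∀ (c : ℂ), ∀ z ∈ V, (z + c).im ≠ 0 → AnalyticAt ℂ (fun y : ℂ => (y + c) ^ (1/2:ℂ)) z := by
    intro c z _ hz
    exact ((analyticAt_id.add analyticAt_const).cpow analyticAt_const (Or.inr hz))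
  have hc₁ : ContDiffOn ℂ (n : WithTop ℕ∞) g₁ V := fun z hz =>
    ((hana _ z hz hz.1).contDiffAt).contDiffWithinAt
  have hc₂ : ContDiffOn ℂ (n : WithTop ℕ∞) g₂ V := fun z hz =>
    ((hana _ z hz hz.2).contDiffAt).contDiffWithinAt
  set d : ℝ := Real.sqrt (w^2 + a^2) with hddef
  have hd0 : 0 < d := Real.sqrt_pos.mpr (by positivity)
  have hda : a ≤ d := by
    rw [hddef]
    have h1 : a^2 ≤ w^2 + a^2 := by nlinarith [sq_nonneg w]
    calc a = Real.sqrt (a^2) := (Real.sqrt_sq ha.le).symm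
      _ ≤ Real.sqrt (w^2 + a^2) := Real.sqrt_le_sqrt h1
  have habs₁ : ‖(↑w : ℂ) + -(↑a*I)‖ = d := by
    rw [Complex.norm_def, hddef]
    congr 1
    simp [Complex.normSq_apply]
    ring
  have habs₂ : ‖(↑w : ℂ) + ↑a*I‖ = d := by
    rw [Complex.norm_def, hddef]
    congr 1
    simp [Complex.normSq_apply]
    ring
  have key : ∀ i, i ≤ n →
      ‖iteratedFDerivWithin ℂ i g₁ V ↑w‖ * ‖iteratedFDerivWithin ℂ (n-i) g₂ V ↑w‖
        = (i.factorial * cp' i) * ((n-i).factorial * cp' (n-i)) * d ^ ((1:ℝ) - n) := by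
    intro i hi
    rw [iteratedFDerivWithin_of_isOpen i hV hwV, iteratedFDerivWithin_of_isOpen (n-i) hV hwV]
    rw [norm_iteratedFDeriv_eq_norm_iteratedDeriv, norm_iteratedFDeriv_eq_norm_iteratedDeriv]
    rw [abs_iter_cpow _ i _ hwV.1, abs_iter_cpow _ (n-i) _ hwV.2, habs₁, habs₂]
    have hcast : ((n - i : ℕ) : ℝ) = (n : ℝ) - i := Nat.cast_sub hi
    have hexp : d ^ ((1:ℝ)/2 - i) * d ^ ((1:ℝ)/2 - ((n-i:ℕ):ℝ)) = d ^ ((1:ℝ) - n) := by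
      rw [← Real.rpow_add hd0, hcast]
      congr 1
      ring
    linear_combination ((i.factorial : ℝ) * cp' i * ((n-i).factorial * cp' (n-i))) * hexp
  calc ‖iteratedDeriv n (fun z => g₁ z * g₂ z) ↑w‖
      = ‖iteratedFDerivWithin ℂ n (fun z => g₁ z * g₂ z) V ↑w‖ := by
        rw [← norm_iteratedFDeriv_eq_norm_iteratedDeriv,
          iteratedFDerivWithin_of_isOpen n hV hwV]
    _ ≤ ∑ i ∈ range (n+1), (n.choose i : ℝ) * ‖iteratedFDerivWithin ℂ i g₁ V ↑w‖
          * ‖iteratedFDerivWithin ℂ (n-i) g₂ V ↑w‖ :=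
        norm_iteratedFDerivWithin_mul_le hc₁ hc₂ hV.uniqueDiffOn hwV le_rfl
    _ = ∑ i ∈ range (n+1), (n.factorial : ℝ) * (cp' i * cp' (n-i)) * d ^ ((1:ℝ) - n) := by
        apply Finset.sum_congr rfl
        intro i hi
        have hi' : i ≤ n := Nat.lt_succ_iff.mp (Finset.mem_range.mp hi)
        rw [mul_assoc, key i hi']
        have hfac : (n.choose i : ℝ) * (i.factorial : ℝ) * ((n-i).factorial : ℝ) = n.factorial := by
          rw [← Nat.cast_mul, ← Nat.cast_mul, Nat.choose_mul_factorial_mul_factorial hi']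
        linear_combination (cp' i * cp' (n-i) * d ^ ((1:ℝ) - n)) * hfac
    _ = (n.factorial : ℝ) * (∑ i ∈ range (n+1), cp' i * cp' (n-i)) * d ^ ((1:ℝ) - n) := by
        rw [Finset.mul_sum, Finset.sum_mul]
    _ ≤ (n.factorial : ℝ) * 1 * d ^ ((1:ℝ) - n) := by
        have h := conv_cp'_le n
        have h1 : (0:ℝ) ≤ d ^ ((1:ℝ) - n) := (Real.rpow_pos_of_pos hd0 _).le
        gcongr
    _ ≤ (n.factorial : ℝ) * a ^ ((1:ℝ) - n) := by
        rw [mul_one]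
        apply mul_le_mul_of_nonneg_left _ (Nat.cast_nonneg _)
        apply Real.rpow_le_rpow_of_nonpos ha hda
        simp only [sub_nonpos]
        exact_mod_cast hn

lemma H_real (a : ℝ) (ha : 0 < a) (x : ℝ) :
    ((↑x : ℂ) + -(↑a*I)) ^ (1/2:ℂ) * ((↑x : ℂ) + ↑a*I) ^ (1/2:ℂ)
      = ((Real.sqrt (x^2 + a^2) : ℝ) : ℂ) := by
  set v : ℂ := (↑x : ℂ) + ↑a*I with hv
  have hvim : v.im = a := by simp [hv]
  have hvre : v.re = x := by simp [hv]
  have hconj : (↑x : ℂ) + -(↑a*I) = (starRingEnd ℂ) v := by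
    apply Complex.ext <;> simp [hv]
  have harg : v.arg ≠ Real.pi := by
    intro h
    have := (Complex.arg_eq_pi_iff.mp h).2
    rw [hvim] at this; exact ha.ne' this
  have hhalf : (starRingEnd ℂ) (1/2 : ℂ) = (1/2 : ℂ) := by
    rw [map_div₀, map_one]
    norm_num [Complex.ext_iff]
  rw [hconj, Complex.conj_cpow v (1/2) harg, hhalf]
  rw [← Complex.normSq_eq_conj_mul_self]
  have hvne : v ≠ 0 := by
    intro h; rw [h] at hvim; simp at hvim; exact ha.ne' hvim.symm
  have habs : ‖v ^ (1/2:ℂ)‖ = ‖v‖ ^ ((1:ℝ)/2) := by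
    rw [Complex.norm_cpow_of_ne_zero hvne]
    simp
  have habsv : ‖v‖ = Real.sqrt (x^2 + a^2) := by
    rw [Complex.norm_def]
    congr 1
    simp [Complex.normSq_apply, hvre, hvim]
    ring
  have hd0 : 0 < Real.sqrt (x^2 + a^2) := Real.sqrt_pos.mpr (by positivity)
  have : Complex.normSq (v ^ (1/2:ℂ)) = Real.sqrt (x^2 + a^2) := by
    rw [← Complex.sq_norm, habs, habsv]
    rw [← Real.rpow_natCast (Real.sqrt (x^2+a^2) ^ ((1:ℝ)/2)) 2, ← Real.rpow_mul hd0.le]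
    norm_num
  rw [this]

lemma iteratedDeriv_const_mul' {𝕜 : Type*} [NontriviallyNormedField 𝕜] (c : 𝕜) (f : 𝕜 → 𝕜) (n : ℕ) :
    iteratedDeriv n (fun x => c * f x) = fun x => c * iteratedDeriv n f x := by
  induction n with
  | zero => rfl
  | succ n ih =>
    funext x
    rw [iteratedDeriv_succ, ih, iteratedDeriv_succ]
    exact deriv_const_mul_field c

lemma transfer (a : ℝ) (ha : 0 < a) (n : ℕ) (x : ℝ) :
    iteratedDeriv n (fun y : ℝ => Real.sqrt (y^2 + a^2)) x
      = (iteratedDeriv n (fun z : ℂ => (z + -(↑a*I)) ^ (1/2:ℂ) * (z + ↑a*I) ^ (1/2:ℂ)) ↑x).re := by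
  set H : ℂ → ℂ := fun z : ℂ => (z + -(↑a*I)) ^ (1/2:ℂ) * (z + ↑a*I) ^ (1/2:ℂ) with hH
  set V : Set ℂ := {z : ℂ | (z + -(↑a*I)).im ≠ 0} ∩ {z : ℂ | (z + ↑a*I).im ≠ 0} with hVdef
  have hana : AnalyticOnNhd ℂ H V := by
    intro z hz
    exact (((analyticAt_id.add analyticAt_const).cpow analyticAt_const (Or.inr hz.1)).mul
      ((analyticAt_id.add analyticAt_const).cpow analyticAt_const (Or.inr hz.2)))
  have hiter : ∀ m, AnalyticOnNhd ℂ (iteratedDeriv m H) V := by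
    intro m
    induction m with
    | zero => exact hana
    | succ m ih => rw [iteratedDeriv_succ]; exact ih.deriv
  induction n generalizing x with
  | zero =>
    simp only [iteratedDeriv_zero]
    show _ = (H ↑x).re
    rw [hH]
    simp only
    rw [H_real a ha x]
    simp
  | succ n ih =>
    have hxV : (↑x : ℂ) ∈ V := by
      constructor <;> simp [ha.ne', Set.mem_setOf_eq]
    have hfun : iteratedDeriv n (fun y : ℝ => Real.sqrt (y^2 + a^2))
        = fun y : ℝ => (iteratedDeriv n H ↑y).re := funext (fun y => ih y)
    rw [iteratedDeriv_succ, hfun, iteratedDeriv_succ]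
    have hD : HasDerivAt (iteratedDeriv n H) (deriv (iteratedDeriv n H) ↑x) ↑x :=
      ((hiter n ↑x hxV).differentiableAt).hasDerivAt
    exact hD.real_of_complex.deriv

theorem deriv_sqrt_bound (t : ℝ) (ht : 1 ≤ t) (n : ℕ) (hn : 1 ≤ n) (w : ℝ) (hw : 0 ≤ w) :
    |iteratedDeriv n (fun x : ℝ => Real.sqrt (1 + t * x ^ 2)) w| ≤
      (n.factorial : ℝ) * Real.exp (2 * t * w) * t ^ n := by
  have ht0 : 0 < t := lt_of_lt_of_le one_pos ht
  set s : ℝ := Real.sqrt t with hsdef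
  have hs0 : 0 < s := Real.sqrt_pos.mpr ht0
  have hst : s ≤ t := by
    nlinarith [Real.sq_sqrt ht0.le, Real.sqrt_nonneg t]
  have hs2 : s^2 = t := Real.sq_sqrt ht0.le
  set a : ℝ := s⁻¹ with hadef
  have ha : 0 < a := inv_pos.mpr hs0
  have hfeq : (fun x : ℝ => Real.sqrt (1 + t * x ^ 2))
      = fun x : ℝ => s * Real.sqrt (x^2 + a^2) := by
    funext x
    have h1 : 1 + t * x^2 = s^2 * (x^2 + a^2) := by
      rw [hadef]
      field_simp
      rw [hs2]
      ring
    rw [h1, Real.sqrt_mul (sq_nonneg s), Real.sqrt_sq hs0.le]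
  rw [hfeq, iteratedDeriv_const_mul']
  rw [abs_mul, abs_of_pos hs0]
  have h2 : |iteratedDeriv n (fun y : ℝ => Real.sqrt (y^2 + a^2)) w|
      ≤ n.factorial * a ^ ((1:ℝ) - n) := by
    rw [transfer a ha n w]
    exact le_trans (Complex.abs_re_le_norm _) (complex_bound a ha n hn w)
  have h3 : s * (n.factorial * a ^ ((1:ℝ) - n)) ≤ (n.factorial : ℝ) * t ^ n := by
    have h4 : a ^ ((1:ℝ) - n) = s ^ ((n:ℝ) - 1) := by
      rw [hadef, Real.inv_rpow hs0.le, ← Real.rpow_neg hs0.le]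
      congr 1
      ring
    rw [h4]
    have h5 : s * s ^ ((n:ℝ) - 1) = s ^ (n:ℝ) := by
      nth_rewrite 1 [show s = s ^ (1:ℝ) by rw [Real.rpow_one]]
      rw [← Real.rpow_add hs0]
      congr 1
      ring
    calc s * (n.factorial * s ^ ((n:ℝ) - 1))
        = (n.factorial : ℝ) * (s * s ^ ((n:ℝ) - 1)) := by ring
      _ = (n.factorial : ℝ) * s ^ (n:ℝ) := by rw [h5]
      _ ≤ (n.factorial : ℝ) * t ^ (n:ℝ) := by
          apply mul_le_mul_of_nonneg_left _ (Nat.cast_nonneg _)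
          exact Real.rpow_le_rpow hs0.le hst (Nat.cast_nonneg n)
      _ = (n.factorial : ℝ) * t ^ n := by rw [Real.rpow_natCast]
  have h6 : (1:ℝ) ≤ Real.exp (2 * t * w) := Real.one_le_exp (by positivity)
  calc s * |iteratedDeriv n (fun y : ℝ => Real.sqrt (y^2 + a^2)) w|
      ≤ s * (n.factorial * a ^ ((1:ℝ) - n)) := by
        apply mul_le_mul_of_nonneg_left h2 hs0.le
    _ ≤ (n.factorial : ℝ) * t ^ n := h3
    _ ≤ (n.factorial : ℝ) * Real.exp (2 * t * w) * t ^ n := by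
        have h7 : (0:ℝ) ≤ t ^ n := by positivity
        nlinarith [mul_nonneg (mul_nonneg (Nat.cast_nonneg (α := ℝ) n.factorial)
          (by linarith : (0:ℝ) ≤ Real.exp (2*t*w) - 1)) h7]
end

section
/- Let t ≥ 1 be a real number. Then for every integer n ≥ 0 and every real w with 0 ≤ w and tw ≤ 1, the n-th derivative of the function A(w) := exp( tw/(1 + √(1 + t w²)) ) satisfies |∂_w^n A(w)| ≤ n! · e^{g(w)} · (4 e^{2tw} t)^n, where g(w) := tw/(1 + √(1 + t w²)). -/
open Complex Metric Real

lemma ofReal_iteratedDeriv_eq {F : ℂ → ℂ} {f : ℝ → ℝ} {A : Set ℂ} (hA : IsOpen A)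
    (hF : AnalyticOnNhd ℂ F A) (hreal : ∀ x : ℝ, F x = (f x : ℂ)) (n : ℕ) :
    ∀ x : ℝ, (x : ℂ) ∈ A → ((iteratedDeriv n f x : ℝ) : ℂ) = iteratedDeriv n F x := by
  induction n with
  | zero => intro x hx; simpa using (hreal x).symm
  | succ n ih =>
    intro x hx
    set G := iteratedDeriv n F with hGdef
    have hG : AnalyticOnNhd ℂ G A := by
      rw [hGdef, iteratedDeriv_eq_iterate]; exact hF.iterated_deriv n
    have hd : HasDerivAt G (deriv G x) x := ((hG _ hx).differentiableAt).hasDerivAt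
    have hd2 : HasDerivAt (fun y : ℝ => G y) (deriv G x) x := hd.comp_ofReal
    have hopen : IsOpen {y : ℝ | (y : ℂ) ∈ A} := hA.preimage Complex.continuous_ofReal
    have heq : (fun y : ℝ => ((iteratedDeriv n f y : ℝ) : ℂ)) =ᶠ[nhds x] (fun y : ℝ => G y) := by
      filter_upwards [hopen.mem_nhds hx] with y hy using ih y hy
    have hd3 : HasDerivAt (fun y : ℝ => ((iteratedDeriv n f y : ℝ) : ℂ)) (deriv G x) x :=
      hd2.congr_of_eventuallyEq heq
    have hre : HasDerivAt (fun y : ℝ => (((iteratedDeriv n f y : ℝ) : ℂ)).re) (deriv G x).re x := by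
      have := (Complex.reCLM.hasFDerivAt.comp x hd3.hasFDerivAt).hasDerivAt
      simpa [Function.comp_def] using this
    have him : HasDerivAt (fun y : ℝ => (((iteratedDeriv n f y : ℝ) : ℂ)).im) (deriv G x).im x := by
      have := (Complex.imCLM.hasFDerivAt.comp x hd3.hasFDerivAt).hasDerivAt
      simpa [Function.comp_def] using this
    have him0 : (deriv G x).im = 0 := by
      have hconst : HasDerivAt (fun _ : ℝ => (0:ℝ)) 0 x := hasDerivAt_const x 0
      have : (fun y : ℝ => (((iteratedDeriv n f y : ℝ) : ℂ)).im) = fun _ : ℝ => (0:ℝ) := by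
        funext y; simp
      rw [this] at him
      exact him.unique hconst
    have hre' : HasDerivAt (iteratedDeriv n f) (deriv G x).re x := by
      have : (fun y : ℝ => (((iteratedDeriv n f y : ℝ) : ℂ)).re) = iteratedDeriv n f := by
        funext y; simp
      rwa [this] at hre
    rw [iteratedDeriv_succ, iteratedDeriv_succ, hre'.deriv]
    exact Complex.ext (by simp [← hGdef]) (by simp [← hGdef, him0])

set_option maxHeartbeats 1000000 in
theorem deriv_exp_part_bound (t : ℝ) (ht : 1 ≤ t) (n : ℕ) (w : ℝ) (hw0 : 0 ≤ w)
    (hw1 : t * w ≤ 1) :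
    |iteratedDeriv n
        (fun x : ℝ => Real.exp (t * x / (1 + Real.sqrt (1 + t * x ^ 2)))) w| ≤
      (n.factorial : ℝ) * Real.exp (t * w / (1 + Real.sqrt (1 + t * w ^ 2))) *
        (4 * Real.exp (2 * t * w) * t) ^ n := by
  have ht0 : (0:ℝ) < t := lt_of_lt_of_le one_pos ht
  set f : ℝ → ℝ := fun x : ℝ => Real.exp (t * x / (1 + Real.sqrt (1 + t * x ^ 2))) with hfdef
  -- case n = 0
  rcases Nat.eq_zero_or_pos n with rfl | hn1
  · simp [hfdef, abs_of_pos (Real.exp_pos _), le_refl]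
  -- setup
  set r : ℝ := 1 / (2 * t) with hrdef
  have hr0 : 0 < r := by positivity
  set F : ℂ → ℂ := fun z =>
    Complex.exp ((t : ℂ) * z / (1 + Complex.exp (Complex.log (1 + (t : ℂ) * z ^ 2) / 2))) with hFdef
  -- real values
  have hreal : ∀ x : ℝ, F x = (f x : ℂ) := by
    intro x
    have hv : (0:ℝ) < 1 + t * x ^ 2 := by positivity
    have h1 : (1 + (t : ℂ) * (x:ℂ) ^ 2) = ((1 + t * x ^ 2 : ℝ) : ℂ) := by push_cast; ring
    have hlog : Complex.log (1 + (t : ℂ) * (x:ℂ) ^ 2) = ((Real.log (1 + t * x ^ 2) : ℝ) : ℂ) := by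
      rw [h1, ← Complex.ofReal_log hv.le]
    have hsqrt : Real.exp (Real.log (1 + t * x ^ 2) / 2) = Real.sqrt (1 + t * x ^ 2) := by
      rw [Real.sqrt_eq_rpow, Real.rpow_def_of_pos hv]; ring_nf
    rw [hFdef]
    simp only
    rw [hlog]
    have : (((Real.log (1 + t * x ^ 2) : ℝ) : ℂ)) / 2 = ((Real.log (1 + t * x ^ 2) / 2 : ℝ) : ℂ) := by
      push_cast; ring
    rw [this, ← Complex.ofReal_exp, hsqrt]
    rw [hfdef]
    simp only
    have h2 : ((t:ℂ) * (x:ℂ) / (1 + ((Real.sqrt (1 + t * x ^ 2) : ℝ) : ℂ))) =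
        ((t * x / (1 + Real.sqrt (1 + t * x ^ 2)) : ℝ) : ℂ) := by push_cast; ring
    rw [h2, ← Complex.ofReal_exp]
  -- positivity of real part of 1 + t z^2 on the closed ball
  have hre_pos : ∀ z ∈ closedBall (w:ℂ) r, 0 < (1 + (t:ℂ) * z ^ 2).re := by
    intro z hz
    have him : |z.im| ≤ r := by
      have h1 : |(z - (w:ℂ)).im| ≤ ‖z - (w:ℂ)‖ := Complex.abs_im_le_norm _
      have h2 : ‖z - (w:ℂ)‖ ≤ r := by
        rwa [mem_closedBall, Complex.dist_eq] at hz
      simpa using h1.trans h2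
    have hcalc : (1 + (t:ℂ) * z ^ 2).re = 1 + t * (z.re * z.re - z.im * z.im) := by
      simp [pow_two, Complex.mul_re]
    rw [hcalc]
    have h3 : z.im * z.im ≤ r * r := by nlinarith [abs_nonneg z.im, neg_abs_le z.im, le_abs_self z.im]
    have h4 : t * (r * r) ≤ 1 / 4 := by
      have he : t * (r * r) = 1 / (4 * t) := by rw [hrdef]; field_simp; ring
      rw [he, div_le_div_iff₀ (by positivity) (by norm_num)]
      linarith
    nlinarith [mul_self_nonneg z.re]
  -- the sqrt term has nonneg real part
  have hs_re : ∀ z ∈ closedBall (w:ℂ) r,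
      0 ≤ (Complex.exp (Complex.log (1 + (t:ℂ) * z ^ 2) / 2)).re := by
    intro z hz
    have hu := hre_pos z hz
    set u := 1 + (t:ℂ) * z ^ 2
    rw [Complex.exp_re]
    apply mul_nonneg (Real.exp_pos _).le
    apply Real.cos_nonneg_of_mem_Icc
    have harg : |u.arg| ≤ Real.pi / 2 := Complex.abs_arg_le_pi_div_two_iff.mpr hu.le
    have : (Complex.log u / 2).im = u.arg / 2 := by
      simp [Complex.div_im, Complex.log_im]
    rw [this]
    constructor
    · nlinarith [abs_nonneg u.arg, neg_abs_le u.arg, le_abs_self u.arg, Real.pi_pos]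
    · nlinarith [abs_nonneg u.arg, neg_abs_le u.arg, le_abs_self u.arg, Real.pi_pos]
  -- denominator nonzero and of modulus ≥ 1
  have hden : ∀ z ∈ closedBall (w:ℂ) r,
      1 ≤ ‖1 + Complex.exp (Complex.log (1 + (t:ℂ) * z ^ 2) / 2)‖ := by
    intro z hz
    have h1 := hs_re z hz
    calc (1:ℝ) ≤ (1 + Complex.exp (Complex.log (1 + (t:ℂ) * z ^ 2) / 2)).re := by
          simp only [Complex.add_re, Complex.one_re]; linarith
      _ ≤ _ := Complex.re_le_norm _
  -- differentiability on the closed ball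
  have hFd : ∀ z ∈ closedBall (w:ℂ) r, DifferentiableAt ℂ F z := by
    intro z hz
    have h1 : DifferentiableAt ℂ (fun z : ℂ => 1 + (t:ℂ) * z ^ 2) z := by fun_prop
    have h2 : DifferentiableAt ℂ (fun z : ℂ => Complex.log (1 + (t:ℂ) * z ^ 2)) z := by
      apply DifferentiableAt.comp (f := fun z : ℂ => 1 + (t:ℂ) * z ^ 2) (g := Complex.log)
      · exact Complex.differentiableAt_log (Complex.mem_slitPlane_iff.mpr (Or.inl (hre_pos z hz)))
      · exact h1
    have h3 : DifferentiableAt ℂ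
        (fun z : ℂ => 1 + Complex.exp (Complex.log (1 + (t:ℂ) * z ^ 2) / 2)) z := by
      apply DifferentiableAt.const_add
      exact (Complex.differentiable_exp.differentiableAt).comp z (h2.div_const 2)
    have hne : (1 + Complex.exp (Complex.log (1 + (t:ℂ) * z ^ 2) / 2)) ≠ 0 := by
      intro h
      have := hden z hz
      rw [h] at this
      simp at this
      linarith
    apply DifferentiableAt.comp (g := Complex.exp)
    · exact Complex.differentiable_exp.differentiableAt
    · exact (differentiableAt_const _ |>.mul differentiableAt_fun_id).div h3 hne
  -- bound of |F| on the closed ball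
  set M : ℝ := Real.exp (t * w + 1 / 2) with hMdef
  have hM : ∀ z ∈ closedBall (w:ℂ) r, ‖F z‖ ≤ M := by
    intro z hz
    have habsz : ‖z‖ ≤ w + r := by
      calc ‖z‖ = ‖z - (w:ℂ) + (w:ℂ)‖ := by ring_nf
        _ ≤ ‖z - (w:ℂ)‖ + ‖(w:ℂ)‖ := norm_add_le _ _
        _ ≤ r + w := by
            have h2 : ‖z - (w:ℂ)‖ ≤ r := by
              rwa [mem_closedBall, Complex.dist_eq] at hz
            have : ‖(w:ℂ)‖ = w := by
              rw [Complex.norm_real, Real.norm_eq_abs, _root_.abs_of_nonneg hw0]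
            linarith [this ▸ le_refl ‖(w:ℂ)‖]
        _ = w + r := by ring
    set q : ℂ := (t : ℂ) * z / (1 + Complex.exp (Complex.log (1 + (t:ℂ) * z ^ 2) / 2)) with hqdef
    have hq : ‖q‖ ≤ t * (w + r) := by
      rw [hqdef, norm_div, norm_mul]
      have hd := hden z hz
      have h0 : (0:ℝ) < ‖1 + Complex.exp (Complex.log (1 + (t:ℂ) * z ^ 2) / 2)‖ := by
        linarith
      rw [div_le_iff₀ h0]
      have h1 : ‖(t:ℂ)‖ = t := by
        rw [Complex.norm_real, Real.norm_eq_abs, abs_of_pos ht0]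
      rw [h1]
      nlinarith [mul_le_mul_of_nonneg_left habsz ht0.le,
        mul_le_mul_of_nonneg_left hd (mul_nonneg ht0.le (by linarith : (0:ℝ) ≤ w + r))]
    have htr : t * (w + r) = t * w + 1 / 2 := by
      rw [hrdef]; field_simp
    have : ‖F z‖ = Real.exp q.re := by
      rw [hFdef]; simp only [Complex.norm_exp, hqdef]
    rw [this, hMdef]
    apply Real.exp_le_exp.mpr
    calc q.re ≤ ‖q‖ := Complex.re_le_norm q
      _ ≤ t * (w + r) := hq
      _ = t * w + 1 / 2 := htr
  -- power series
  set R : NNReal := ⟨r, hr0.le⟩ with hRdef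
  have hRr : (R : ℝ) = r := rfl
  have hRpos : 0 < R := by
    rw [← NNReal.coe_lt_coe, hRr]; exact hr0
  have hdiffOn : DifferentiableOn ℂ F (closedBall (w:ℂ) (R:ℝ)) := fun z hz =>
    (hFd z (by rwa [hRr] at hz)).differentiableWithinAt
  have hps := hdiffOn.hasFPowerSeriesOnBall hRpos
  -- transfer to the real derivative
  have hAnal : AnalyticOnNhd ℂ F (Metric.ball (w:ℂ) r) := by
    apply DifferentiableOn.analyticOnNhd _ isOpen_ball
    exact fun z hz => (hFd z (ball_subset_closedBall hz)).differentiableWithinAt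
  have htrans := ofReal_iteratedDeriv_eq isOpen_ball hAnal hreal n w (mem_ball_self hr0)
  have h1 : |iteratedDeriv n f w| = ‖iteratedDeriv n F w‖ := by
    rw [← htrans, Complex.norm_real, Real.norm_eq_abs]
  -- Cauchy estimate on the coefficient
  have h2 := hps.factorial_smul (1:ℂ) n
  have h3 : ‖iteratedDeriv n F w‖ ≤ (n.factorial : ℝ) * ‖cauchyPowerSeries F w (R:ℝ) n‖ := by
    rw [iteratedDeriv_eq_iteratedFDeriv, ← h2, nsmul_eq_mul]
    rw [norm_mul, Complex.norm_natCast]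
    apply mul_le_mul_of_nonneg_left _ (Nat.cast_nonneg _)
    calc ‖(cauchyPowerSeries F (w:ℂ) (R:ℝ) n) fun _ => (1:ℂ)‖
        ≤ ‖cauchyPowerSeries F (w:ℂ) (R:ℝ) n‖ * ∏ _i : Fin n, ‖(1:ℂ)‖ :=
          (cauchyPowerSeries F (w:ℂ) (R:ℝ) n).le_opNorm _
      _ = ‖cauchyPowerSeries F (w:ℂ) (R:ℝ) n‖ := by simp
  have h4 := norm_cauchyPowerSeries_le F (w:ℂ) (R:ℝ) n
  rw [hRr] at h3 h4
  -- bound the circle integral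
  have hcont : Continuous fun θ : ℝ => ‖F (circleMap (w:ℂ) r θ)‖ := by
    apply Continuous.norm
    rw [continuous_iff_continuousAt]
    intro θ
    exact ((hFd _ (sphere_subset_closedBall (circleMap_mem_sphere _ hr0.le θ))).continuousAt).comp
      (continuous_circleMap _ _).continuousAt
  have hint : (∫ θ in (0:ℝ)..2 * Real.pi, ‖F (circleMap (w:ℂ) r θ)‖) ≤ 2 * Real.pi * M := by
    have hmono := intervalIntegral.integral_mono_on
      (by positivity : (0:ℝ) ≤ 2 * Real.pi)
      (hcont.intervalIntegrable _ _) (intervalIntegrable_const (c := M) (μ := MeasureTheory.volume) (a := 0) (b := 2*Real.pi))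
      (fun θ _ => hM _ (sphere_subset_closedBall (circleMap_mem_sphere _ hr0.le θ)))
    simpa [intervalIntegral.integral_const, smul_eq_mul] using hmono
  have hMnn : 0 ≤ M := (Real.exp_pos _).le
  have hrinv : |r|⁻¹ = 2 * t := by
    rw [abs_of_pos hr0, hrdef]
    field_simp
  have h5 : ‖cauchyPowerSeries F (w:ℂ) r n‖ ≤ M * (2 * t) ^ n := by
    calc ‖cauchyPowerSeries F (w:ℂ) r n‖
        ≤ ((2 * Real.pi)⁻¹ * ∫ θ : ℝ in (0:ℝ)..2 * Real.pi, ‖F (circleMap (w:ℂ) r θ)‖) *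
            |r|⁻¹ ^ n := h4
      _ ≤ ((2 * Real.pi)⁻¹ * (2 * Real.pi * M)) * |r|⁻¹ ^ n := by
          apply mul_le_mul_of_nonneg_right _ (pow_nonneg (inv_nonneg.mpr (abs_nonneg r)) n)
          apply mul_le_mul_of_nonneg_left hint (inv_nonneg.mpr (by positivity))
      _ = M * (2 * t) ^ n := by
          rw [hrinv]
          have hpi : (2 * Real.pi) ≠ 0 := by positivity
          field_simp
  -- numeric comparison
  set g : ℝ := t * w / (1 + Real.sqrt (1 + t * w ^ 2)) with hgdef
  have hg0 : 0 ≤ g := by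
    rw [hgdef]
    apply div_nonneg (mul_nonneg ht0.le hw0)
    positivity
  have hexpg : 1 ≤ Real.exp g := Real.one_le_exp hg0
  set e2 : ℝ := Real.exp (2 * t * w) with he2def
  have he2 : 1 ≤ e2 := Real.one_le_exp (by positivity)
  have ehalf : Real.exp (1 / 2) ≤ 2 := by
    nlinarith [Real.exp_one_lt_d9, Real.exp_pos (1/2 : ℝ),
      show Real.exp (1/2 : ℝ) * Real.exp (1/2 : ℝ) = Real.exp 1 by
        rw [← Real.exp_add]; norm_num]
  have hM2 : M ≤ 2 * e2 := by
    rw [hMdef, he2def, Real.exp_add]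
    have hmono : Real.exp (t * w) ≤ Real.exp (2 * t * w) :=
      Real.exp_le_exp.mpr (by nlinarith)
    nlinarith [Real.exp_pos (t * w), Real.exp_pos (2 * t * w)]
  have hpow : 2 * e2 ≤ (2 * e2) ^ n := le_self_pow₀ (by linarith) (Nat.pos_iff_ne_zero.mp hn1)
  have hnum : M * (2 * t) ^ n ≤ Real.exp g * (4 * e2 * t) ^ n := by
    have hfact : (4 * e2 * t) ^ n = (2 * e2) ^ n * (2 * t) ^ n := by
      rw [← mul_pow]; ring_nf
    rw [hfact, ← mul_assoc]
    apply mul_le_mul_of_nonneg_right _ (by positivity)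
    calc M ≤ 2 * e2 := hM2
      _ ≤ (2 * e2) ^ n := hpow
      _ ≤ Real.exp g * (2 * e2) ^ n := by nlinarith [pow_pos (show (0:ℝ) < 2 * e2 by linarith) n]
  -- conclude
  calc |iteratedDeriv n f w| = ‖iteratedDeriv n F w‖ := h1
    _ ≤ (n.factorial : ℝ) * ‖cauchyPowerSeries F (w:ℂ) r n‖ := h3
    _ ≤ (n.factorial : ℝ) * (M * (2 * t) ^ n) := by
        apply mul_le_mul_of_nonneg_left h5 (Nat.cast_nonneg _)
    _ ≤ (n.factorial : ℝ) * (Real.exp g * (4 * e2 * t) ^ n) := by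
        apply mul_le_mul_of_nonneg_left hnum (Nat.cast_nonneg _)
    _ = (n.factorial : ℝ) * Real.exp g * (4 * e2 * t) ^ n := by ring
end

section
/- Let t ≥ 1 be a real number. Then for every integer n ≥ 0 and every real w ≥ 0, the n-th derivative of the function D(w) := (1 + t w²)^{−3/2} satisfies |∂_w^n D(w)| ≤ n! · (2 e^{2tw} t)^n. -/
open Real

private noncomputable def Dfun (t : ℝ) : ℝ → ℝ := fun x => (1 + t * x ^ 2) ^ (-(3 : ℝ) / 2)

private lemma Dfun_pos (t : ℝ) (ht : 1 ≤ t) (x : ℝ) : 0 < 1 + t * x ^ 2 := by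
  nlinarith [sq_nonneg x]

private lemma Dfun_contDiff (t : ℝ) (ht : 1 ≤ t) : ContDiff ℝ ⊤ (Dfun t) := by
  rw [contDiff_iff_contDiffAt]
  intro x
  have h1 : ContDiffAt ℝ ⊤ (fun x : ℝ => 1 + t * x ^ 2) x := by fun_prop
  exact h1.rpow_const_of_ne (Dfun_pos t ht x).ne'

private lemma Dfun_hasDerivAt (t : ℝ) (ht : 1 ≤ t) (m : ℕ) (x : ℝ) :
    HasDerivAt (iteratedDeriv m (Dfun t)) (iteratedDeriv (m + 1) (Dfun t) x) x := by
  have h := (Dfun_contDiff t ht).differentiable_iteratedDeriv m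
    (by exact_mod_cast WithTop.coe_lt_top _)
  rw [iteratedDeriv_succ]
  exact (h x).hasDerivAt

private lemma inner_hasDerivAt (t x : ℝ) :
    HasDerivAt (fun x : ℝ => 1 + t * x ^ 2) (2 * t * x) x := by
  have := ((hasDerivAt_pow 2 x).const_mul t).const_add 1
  simpa [mul_comm, mul_assoc, mul_left_comm] using this

private lemma Dfun_ident1 (t : ℝ) (ht : 1 ≤ t) (x : ℝ) :
    (1 + t * x ^ 2) * iteratedDeriv 1 (Dfun t) x
      = -(3 * t * x) * iteratedDeriv 0 (Dfun t) x := by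
  have h0 := Dfun_pos t ht x
  have hd : HasDerivAt (Dfun t)
      (2 * t * x * (-(3 : ℝ) / 2) * (1 + t * x ^ 2) ^ (-(3 : ℝ) / 2 - 1)) x :=
    (inner_hasDerivAt t x).rpow_const (Or.inl h0.ne')
  have h1 : iteratedDeriv 1 (Dfun t) x
      = 2 * t * x * (-(3 : ℝ) / 2) * (1 + t * x ^ 2) ^ (-(3 : ℝ) / 2 - 1) := by
    rw [iteratedDeriv_one]
    exact hd.deriv
  have h2 : (1 + t * x ^ 2) ^ (-(3 : ℝ) / 2)
      = (1 + t * x ^ 2) ^ (-(3 : ℝ) / 2 - 1) * (1 + t * x ^ 2) := by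
    rw [← Real.rpow_add_one h0.ne']
    norm_num
  rw [h1, iteratedDeriv_zero]
  show _ = -(3 * t * x) * (1 + t * x ^ 2) ^ (-(3 : ℝ) / 2)
  rw [h2]; ring

private lemma Dfun_identS (t : ℝ) (ht : 1 ≤ t) (n : ℕ) (x : ℝ) :
    (1 + t * x ^ 2) * iteratedDeriv (n + 2) (Dfun t) x
      = -((2 * (n : ℝ) + 5) * t * x) * iteratedDeriv (n + 1) (Dfun t) x
        - ((n : ℝ) + 1) * ((n : ℝ) + 3) * t * iteratedDeriv n (Dfun t) x := by
  induction n generalizing x with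
  | zero =>
    -- differentiate ident1
    have hL : HasDerivAt (fun x => (1 + t * x ^ 2) * iteratedDeriv 1 (Dfun t) x)
        (2 * t * x * iteratedDeriv 1 (Dfun t) x
          + (1 + t * x ^ 2) * iteratedDeriv 2 (Dfun t) x) x :=
      (inner_hasDerivAt t x).mul (Dfun_hasDerivAt t ht 1 x)
    have hR : HasDerivAt (fun x => -(3 * t * x) * iteratedDeriv 0 (Dfun t) x)
        (-(3 * t) * iteratedDeriv 0 (Dfun t) x
          + -(3 * t * x) * iteratedDeriv 1 (Dfun t) x) x := by
      have h1 : HasDerivAt (fun x : ℝ => -(3 * t * x)) (-(3 * t)) x := by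
        simpa [Pi.neg_def] using ((hasDerivAt_id x).const_mul (3 * t)).neg
      exact h1.mul (Dfun_hasDerivAt t ht 0 x)
    have heq : (fun x => (1 + t * x ^ 2) * iteratedDeriv 1 (Dfun t) x)
        = fun x => -(3 * t * x) * iteratedDeriv 0 (Dfun t) x :=
      funext fun x => Dfun_ident1 t ht x
    have := hL.unique (heq ▸ hR)
    push_cast
    linarith [this]
  | succ n ih =>
    have hL : HasDerivAt (fun x => (1 + t * x ^ 2) * iteratedDeriv (n + 2) (Dfun t) x)
        (2 * t * x * iteratedDeriv (n + 2) (Dfun t) x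
          + (1 + t * x ^ 2) * iteratedDeriv (n + 3) (Dfun t) x) x :=
      (inner_hasDerivAt t x).mul (Dfun_hasDerivAt t ht (n + 2) x)
    have hR : HasDerivAt (fun x =>
        -((2 * (n : ℝ) + 5) * t * x) * iteratedDeriv (n + 1) (Dfun t) x
          - ((n : ℝ) + 1) * ((n : ℝ) + 3) * t * iteratedDeriv n (Dfun t) x)
        ((-((2 * (n : ℝ) + 5) * t) * iteratedDeriv (n + 1) (Dfun t) x
            + -((2 * (n : ℝ) + 5) * t * x) * iteratedDeriv (n + 2) (Dfun t) x)
          - ((n : ℝ) + 1) * ((n : ℝ) + 3) * t * iteratedDeriv (n + 1) (Dfun t) x) x := by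
      have h1 : HasDerivAt (fun x : ℝ => -((2 * (n : ℝ) + 5) * t * x))
          (-((2 * (n : ℝ) + 5) * t)) x := by
        simpa [Pi.neg_def] using ((hasDerivAt_id x).const_mul ((2 * (n : ℝ) + 5) * t)).neg
      exact (h1.mul (Dfun_hasDerivAt t ht (n + 1) x)).sub
        ((Dfun_hasDerivAt t ht n x).const_mul _)
    have heq : (fun x => (1 + t * x ^ 2) * iteratedDeriv (n + 2) (Dfun t) x)
        = fun x => -((2 * (n : ℝ) + 5) * t * x) * iteratedDeriv (n + 1) (Dfun t) x
          - ((n : ℝ) + 1) * ((n : ℝ) + 3) * t * iteratedDeriv n (Dfun t) x :=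
      funext fun x => ih x
    have key := hL.unique (heq ▸ hR)
    have h3 : iteratedDeriv (n + 1 + 2) (Dfun t) x = iteratedDeriv (n + 3) (Dfun t) x := by
      norm_num
    push_cast
    rw [show n + 1 + 2 = n + 3 from rfl, show n + 1 + 1 = n + 2 from rfl]
    linarith [key]

set_option maxHeartbeats 2000000 in
theorem deriv_D_bound (t : ℝ) (ht : 1 ≤ t) (n : ℕ) (w : ℝ) (hw : 0 ≤ w) :
    |iteratedDeriv n (fun x : ℝ => (1 + t * x ^ 2) ^ (-(3 : ℝ) / 2)) w| ≤
      (n.factorial : ℝ) * (2 * Real.exp (2 * t * w) * t) ^ n := by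
  have hfun : (fun x : ℝ => (1 + t * x ^ 2) ^ (-(3 : ℝ) / 2)) = Dfun t := rfl
  rw [hfun]
  set E := Real.exp (2 * t * w) with hE
  have hE1 : 1 + 2 * t * w ≤ E := by
    have := Real.add_one_le_exp (2 * t * w); linarith
  have hEpos : (0 : ℝ) < E := Real.exp_pos _
  have hE1' : (1 : ℝ) ≤ E := by nlinarith
  have hu : (0 : ℝ) < 1 + t * w ^ 2 := Dfun_pos t ht w
  have hu1 : (1 : ℝ) ≤ 1 + t * w ^ 2 := by nlinarith [sq_nonneg w]
  have hcpos : (0 : ℝ) < 2 * E * t := by nlinarith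
  -- abs absorb: |G m w| ≤ |(1+tw²) G m w|
  have habs : ∀ m, |iteratedDeriv m (Dfun t) w|
      ≤ |(1 + t * w ^ 2) * iteratedDeriv m (Dfun t) w| := by
    intro m
    rw [abs_mul, abs_of_pos hu]
    nlinarith [abs_nonneg (iteratedDeriv m (Dfun t) w)]
  have h0 : |iteratedDeriv 0 (Dfun t) w| ≤ 1 := by
    rw [iteratedDeriv_zero]
    have hnn : (0:ℝ) ≤ Dfun t w := Real.rpow_nonneg hu.le _
    rw [abs_of_nonneg hnn]
    exact Real.rpow_le_one_of_one_le_of_nonpos hu1 (by norm_num)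
  have h1 : |iteratedDeriv 1 (Dfun t) w| ≤ 2 * E * t := by
    calc |iteratedDeriv 1 (Dfun t) w| ≤ |(1 + t * w ^ 2) * iteratedDeriv 1 (Dfun t) w| :=
          habs 1
      _ = |(-(3 * t * w)) * iteratedDeriv 0 (Dfun t) w| := by rw [Dfun_ident1 t ht w]
      _ = 3 * t * w * |iteratedDeriv 0 (Dfun t) w| := by
          rw [abs_mul, abs_neg, abs_of_nonneg (by nlinarith : (0:ℝ) ≤ 3 * t * w)]
      _ ≤ 3 * t * w * 1 := by
          apply mul_le_mul_of_nonneg_left h0 (by nlinarith)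
      _ ≤ 2 * E * t := by nlinarith
  have main : ∀ m : ℕ, |iteratedDeriv m (Dfun t) w| ≤ (m.factorial : ℝ) * (2 * E * t) ^ m
      ∧ |iteratedDeriv (m + 1) (Dfun t) w|
        ≤ ((m + 1).factorial : ℝ) * (2 * E * t) ^ (m + 1) := by
    intro m
    induction m with
    | zero =>
      constructor
      · simpa using h0
      · simpa using h1
    | succ m ih =>
      refine ⟨ih.2, ?_⟩
      have hBm := ih.1
      have hBm1 := ih.2
      have hkey := Dfun_identS t ht m w
      set A := iteratedDeriv m (Dfun t) w
      set B := iteratedDeriv (m + 1) (Dfun t) w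
      set C := iteratedDeriv (m + 2) (Dfun t) w
      have hC : |C| ≤ (2 * (m : ℝ) + 5) * t * w * |B| + ((m : ℝ) + 1) * ((m : ℝ) + 3) * t * |A| := by
        calc |C| ≤ |(1 + t * w ^ 2) * C| := habs (m + 2)
          _ = |(-((2 * (m : ℝ) + 5) * t * w)) * B - ((m : ℝ) + 1) * ((m : ℝ) + 3) * t * A| := by
              rw [hkey]
          _ ≤ |(-((2 * (m : ℝ) + 5) * t * w)) * B| + |((m : ℝ) + 1) * ((m : ℝ) + 3) * t * A| :=
              abs_sub _ _
          _ = (2 * (m : ℝ) + 5) * t * w * |B| + ((m : ℝ) + 1) * ((m : ℝ) + 3) * t * |A| := by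
              rw [abs_mul, abs_mul, abs_neg,
                abs_of_nonneg (by positivity : (0:ℝ) ≤ (2 * (m : ℝ) + 5) * t * w),
                abs_of_nonneg (by positivity : (0:ℝ) ≤ ((m : ℝ) + 1) * ((m : ℝ) + 3) * t)]
      -- now numeric
      have hfm : (0:ℝ) < (m.factorial : ℝ) := by positivity
      have hcn : (0:ℝ) < (2 * E * t) ^ m := by positivity
      have hfact1 : ((m + 1).factorial : ℝ) = ((m : ℝ) + 1) * (m.factorial : ℝ) := by
        push_cast [Nat.factorial_succ]; ring
      have hfact2 : ((m + 2).factorial : ℝ)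
          = ((m : ℝ) + 2) * (((m : ℝ) + 1) * (m.factorial : ℝ)) := by
        rw [show m + 2 = (m + 1) + 1 from rfl]
        push_cast [Nat.factorial_succ]; ring
      have hpow1 : (2 * E * t) ^ (m + 1) = (2 * E * t) * (2 * E * t) ^ m := by ring
      have hpow2 : (2 * E * t) ^ (m + 2) = (2 * E * t) ^ 2 * (2 * E * t) ^ m := by ring
      rw [show m + 1 + 1 = m + 2 from rfl]
      rw [hfact2, hpow2]
      have hB' : |B| ≤ ((m : ℝ) + 1) * (m.factorial : ℝ) * ((2 * E * t) * (2 * E * t) ^ m) := by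
        rw [hfact1, hpow1] at hBm1; exact hBm1
      have hBnn := abs_nonneg B
      have hAnn := abs_nonneg A
      calc |C| ≤ (2 * (m : ℝ) + 5) * t * w * |B| + ((m : ℝ) + 1) * ((m : ℝ) + 3) * t * |A| := hC
        _ ≤ (2 * (m : ℝ) + 5) * t * w * (((m : ℝ) + 1) * (m.factorial : ℝ) * ((2 * E * t) * (2 * E * t) ^ m))
            + ((m : ℝ) + 1) * ((m : ℝ) + 3) * t * ((m.factorial : ℝ) * (2 * E * t) ^ m) := by
            have l1 := mul_le_mul_of_nonneg_left hB' (by positivity : (0:ℝ) ≤ (2 * (m : ℝ) + 5) * t * w)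
            have l2 := mul_le_mul_of_nonneg_left hBm (by positivity : (0:ℝ) ≤ ((m : ℝ) + 1) * ((m : ℝ) + 3) * t)
            linarith
        _ = ((2 * (m : ℝ) + 5) * t * w * (2 * E * t) + ((m : ℝ) + 3) * t)
              * (((m : ℝ) + 1) * (m.factorial : ℝ) * (2 * E * t) ^ m) := by ring
        _ ≤ (((m : ℝ) + 2) * (4 * E ^ 2 * t ^ 2))
              * (((m : ℝ) + 1) * (m.factorial : ℝ) * (2 * E * t) ^ m) := by
            have hkey2 : (2 * (m : ℝ) + 5) * t * w * (2 * E * t) + ((m : ℝ) + 3) * t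
                ≤ ((m : ℝ) + 2) * (4 * E ^ 2 * t ^ 2) := by
              have ht0 : (0:ℝ) ≤ t := by linarith
              have P1 : (0:ℝ) ≤ 4 * ((m : ℝ) + 2) * t ^ 2 * E * (E - (1 + 2 * t * w)) :=
                mul_nonneg (by positivity) (by linarith)
              have P2 : (0:ℝ) ≤ t * t * E * w * ((8 * (m : ℝ) + 16) * t - (4 * (m : ℝ) + 10)) := by
                refine mul_nonneg (by positivity) ?_
                have := mul_le_mul_of_nonneg_left ht (by positivity : (0:ℝ) ≤ 8 * (m : ℝ) + 16)
                linarith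
              have P3 : (0:ℝ) ≤ t * (4 * ((m : ℝ) + 2) * t * E - ((m : ℝ) + 3)) := by
                refine mul_nonneg ht0 ?_
                have htE : (1:ℝ) ≤ t * E := by nlinarith
                nlinarith
              nlinarith [P1, P2, P3]
            exact mul_le_mul_of_nonneg_right hkey2 (by positivity)
        _ = ((m : ℝ) + 2) * (((m : ℝ) + 1) * (m.factorial : ℝ)) * ((2 * E * t) ^ 2 * (2 * E * t) ^ m) := by
            ring
  exact (main n).1
end

section
/- Let d ≥ 2 and 2 ≤ m ≤ d be integers, and let i_1, …, i_{2m−2} be nonnegative integers with each i_k ≤ d and i_1 + ⋯ + i_{2m−2} = m(m−1). Then ∏_{k=1}^{2m−2} C(d, i_k) ≤ (2ed/m)^{m(m−1)}. -/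
open Finset Real

/-- Per-term bound: C(d,j) ≤ (d·e)^j / j^j (with 0^0 = 1). -/
lemma choose_le_aux (d j : ℕ) :
    (d.choose j : ℝ) * (j : ℝ) ^ j ≤ ((d : ℝ) * Real.exp 1) ^ j := by
  rcases Nat.eq_zero_or_pos j with hj | hj
  · simp [hj]
  have h1 : (d.choose j : ℝ) * (j.factorial : ℝ) ≤ (d : ℝ) ^ j := by
    have : j.factorial * d.choose j ≤ d ^ j := by
      rw [← Nat.descFactorial_eq_factorial_mul_choose]
      exact Nat.descFactorial_le_pow d j
    calc (d.choose j : ℝ) * (j.factorial : ℝ) = ((j.factorial * d.choose j : ℕ) : ℝ) := by push_cast; ring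
      _ ≤ ((d ^ j : ℕ) : ℝ) := by exact_mod_cast this
      _ = (d : ℝ) ^ j := by push_cast; ring
  have h2 : (j : ℝ) ^ j ≤ Real.exp 1 ^ j * (j.factorial : ℝ) := by
    have := Real.pow_div_factorial_le_exp (x := (j : ℝ)) (by positivity) j
    rw [div_le_iff₀ (by positivity)] at this
    calc (j : ℝ) ^ j ≤ Real.exp j * (j.factorial : ℝ) := this
      _ = Real.exp 1 ^ j * (j.factorial : ℝ) := by rw [Real.exp_one_pow]
  have hfac : (0 : ℝ) < (j.factorial : ℝ) := by positivity
  have hc : (0 : ℝ) ≤ (d.choose j : ℝ) := by positivity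
  calc (d.choose j : ℝ) * (j : ℝ) ^ j
      ≤ (d.choose j : ℝ) * (Real.exp 1 ^ j * (j.factorial : ℝ)) := by
        exact mul_le_mul_of_nonneg_left h2 hc
    _ = ((d.choose j : ℝ) * (j.factorial : ℝ)) * Real.exp 1 ^ j := by ring
    _ ≤ (d : ℝ) ^ j * Real.exp 1 ^ j := by
        exact mul_le_mul_of_nonneg_right h1 (by positivity)
    _ = ((d : ℝ) * Real.exp 1) ^ j := by rw [mul_pow]

theorem binom_product_bound' (d m : ℕ) (hd : 2 ≤ d) (hm2 : 2 ≤ m) (hmd : m ≤ d)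
    (i : Fin (2 * m - 2) → ℕ) (hile : ∀ k, i k ≤ d) (hisum : ∑ k, i k = m * (m - 1)) :
    (∏ k, (d.choose (i k) : ℝ)) ≤ (2 * Real.exp 1 * d / m) ^ (m * (m - 1)) := by
  have hn : (2 * m - 2 : ℕ) = 2 * m - 2 := rfl
  have hm0 : (0 : ℝ) < m := by positivity
  have hn0 : 0 < 2 * m - 2 := by omega
  have hnR : (0 : ℝ) < ((2 * m - 2 : ℕ) : ℝ) := by exact_mod_cast hn0
  have hSn : ((m * (m - 1) : ℕ) : ℝ) = ((2 * m - 2 : ℕ) : ℝ) * ((m : ℝ) / 2) := by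
    have h1 : ((m * (m - 1) : ℕ) : ℝ) = (m : ℝ) * ((m : ℝ) - 1) := by
      push_cast [Nat.cast_sub (by omega : 1 ≤ m)]; ring
    have h2 : ((2 * m - 2 : ℕ) : ℝ) = 2 * (m : ℝ) - 2 := by
      push_cast [Nat.cast_sub (by omega : 2 ≤ 2 * m)]; ring
    rw [h1, h2]; ring
  -- Jensen: ∑ i_k log i_k ≥ S log (m/2)
  have hjensen : ((m * (m - 1) : ℕ) : ℝ) * Real.log ((m : ℝ) / 2) ≤ ∑ k, (i k : ℝ) * Real.log (i k) := by
    have hconv : ConvexOn ℝ (Set.Ici (0 : ℝ)) (fun x => x * Real.log x) :=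
      Real.convexOn_mul_log
    have hw : ∀ k ∈ (univ : Finset (Fin (2 * m - 2))), (0 : ℝ) ≤ ((2 * m - 2 : ℕ) : ℝ)⁻¹ := fun _ _ => by positivity
    have hw1 : ∑ _k ∈ (univ : Finset (Fin (2 * m - 2))), ((2 * m - 2 : ℕ) : ℝ)⁻¹ = 1 := by
      rw [Finset.sum_const, Finset.card_univ, Fintype.card_fin, nsmul_eq_mul]
      field_simp
    have hmem : ∀ k ∈ (univ : Finset (Fin (2 * m - 2))), ((i k : ℝ)) ∈ Set.Ici (0 : ℝ) :=
      fun k _ => Set.mem_Ici.2 (by positivity)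
    have := hconv.map_sum_le hw hw1 hmem
    have hsum : ∑ k, ((2 * m - 2 : ℕ) : ℝ)⁻¹ • (i k : ℝ) = (m : ℝ) / 2 := by
      simp only [smul_eq_mul, ← Finset.mul_sum]
      have : ∑ k, (i k : ℝ) = ((m * (m - 1) : ℕ) : ℝ) := by exact_mod_cast congrArg (Nat.cast (R := ℝ)) hisum
      rw [this, hSn]
      field_simp
    rw [hsum] at this
    have h2 : ((2 * m - 2 : ℕ) : ℝ) * (((m : ℝ) / 2) * Real.log ((m : ℝ) / 2)) ≤
        ((2 * m - 2 : ℕ) : ℝ) * ∑ k, ((2 * m - 2 : ℕ) : ℝ)⁻¹ • ((i k : ℝ) * Real.log (i k)) :=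
      mul_le_mul_of_nonneg_left this (le_of_lt hnR)
    calc ((m * (m - 1) : ℕ) : ℝ) * Real.log ((m : ℝ) / 2)
        = ((2 * m - 2 : ℕ) : ℝ) * (((m : ℝ) / 2) * Real.log ((m : ℝ) / 2)) := by rw [hSn]; ring
      _ ≤ ((2 * m - 2 : ℕ) : ℝ) * ∑ k, ((2 * m - 2 : ℕ) : ℝ)⁻¹ • ((i k : ℝ) * Real.log (i k)) := h2
      _ = ∑ k, (i k : ℝ) * Real.log (i k) := by
          simp only [smul_eq_mul, ← Finset.mul_sum]
          field_simp
  -- ∏ (i k)^(i k) ≥ (m/2)^S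
  have hP : ((m : ℝ) / 2) ^ (m * (m - 1)) ≤ ∏ k, (i k : ℝ) ^ (i k) := by
    have hterm : ∀ k : Fin (2 * m - 2), Real.exp ((i k : ℝ) * Real.log (i k)) = (i k : ℝ) ^ (i k) := by
      intro k
      rcases Nat.eq_zero_or_pos (i k) with h | h
      · simp [h]
      · rw [← Real.rpow_natCast, Real.rpow_def_of_pos (by exact_mod_cast h)]
        exact congrArg Real.exp (mul_comm _ _)
    calc ((m : ℝ) / 2) ^ (m * (m - 1)) = Real.exp (((m * (m - 1) : ℕ) : ℝ) * Real.log ((m : ℝ) / 2)) := by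
          rw [← Real.rpow_natCast, Real.rpow_def_of_pos (by positivity)]
          exact congrArg Real.exp (mul_comm _ _)
      _ ≤ Real.exp (∑ k, (i k : ℝ) * Real.log (i k)) := Real.exp_le_exp.2 hjensen
      _ = ∏ k, Real.exp ((i k : ℝ) * Real.log (i k)) := by rw [Real.exp_sum]
      _ = ∏ k, (i k : ℝ) ^ (i k) := Finset.prod_congr rfl fun k _ => hterm k
  -- Main chain
  have hstep : (∏ k, (d.choose (i k) : ℝ)) * ∏ k, (i k : ℝ) ^ (i k) ≤
      ((d : ℝ) * Real.exp 1) ^ (m * (m - 1)) := by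
    rw [← Finset.prod_mul_distrib]
    calc ∏ k, (d.choose (i k) : ℝ) * (i k : ℝ) ^ (i k)
        ≤ ∏ k, ((d : ℝ) * Real.exp 1) ^ (i k) :=
          Finset.prod_le_prod (fun k _ => by positivity) (fun k _ => choose_le_aux d (i k))
      _ = ((d : ℝ) * Real.exp 1) ^ (∑ k, i k) := Finset.prod_pow_eq_pow_sum _ _ _
      _ = ((d : ℝ) * Real.exp 1) ^ (m * (m - 1)) := by rw [hisum]
  have hPpos : (0 : ℝ) < ∏ k, (i k : ℝ) ^ (i k) :=
    lt_of_lt_of_le (by positivity) hP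
  have hchoosepos : (0 : ℝ) ≤ ∏ k, (d.choose (i k) : ℝ) :=
    Finset.prod_nonneg fun k _ => by positivity
  have key : (∏ k, (d.choose (i k) : ℝ)) * ((m : ℝ) / 2) ^ (m * (m - 1)) ≤
      ((d : ℝ) * Real.exp 1) ^ (m * (m - 1)) :=
    le_trans (mul_le_mul_of_nonneg_left hP hchoosepos) hstep
  have hfin : (∏ k, (d.choose (i k) : ℝ)) ≤
      ((d : ℝ) * Real.exp 1) ^ (m * (m - 1)) / ((m : ℝ) / 2) ^ (m * (m - 1)) := by
    rw [le_div_iff₀ (by positivity)]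
    exact key
  calc (∏ k, (d.choose (i k) : ℝ))
      ≤ ((d : ℝ) * Real.exp 1) ^ (m * (m - 1)) / ((m : ℝ) / 2) ^ (m * (m - 1)) := hfin
    _ = (((d : ℝ) * Real.exp 1) / ((m : ℝ) / 2)) ^ (m * (m - 1)) := (div_pow _ _ _).symm
    _ = (2 * Real.exp 1 * d / m) ^ (m * (m - 1)) := by
        have hb : ((d : ℝ) * Real.exp 1) / ((m : ℝ) / 2) = 2 * Real.exp 1 * d / m := by
          field_simp
        rw [hb]
end
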